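/- arXiv:1803.04533 — 9 statements merged into one kernel-verified Lean document; each statement's English description precedes it below -/
import Mathlib

section
/- Let p be a prime and let f : ℚ_p → ℚ_p be locally analytic on ℤ_p. Then there exist a positive integer m₀ and a natural number μ such that for every integer m ≥ m₀: (i) there are exactly μ non-constant congruence classes modulo p^m with respect to the sequence (f(n))_{n∈ℕ₊} and the prime p; and (ii) each non-constant class [a]_{p^m} modulo p^m splits into p−1 constant classes [a₁]_{p^{m+1}}, …, [a_{p−1}]_{p^{m+1}} modulo p^{m+1}, each with p-adic valuation equal to min v_p(f([a]_{p^m})), and one non-constant class [a₀]_{p^{m+1}} modulo p^{m+1} with min v_p(f([a₀]_{p^{m+1}})) > min v_p(f([a]_{p^m})). -/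
open scoped Classical

/-- `p`-adic valuation of a `p`-adic number, with `v_p(0) = ⊤`. -/
noncomputable def vpQp (p : ℕ) [Fact p.Prime] (x : ℚ_[p]) : WithTop ℤ :=
  if x = 0 then ⊤ else (x.valuation : WithTop ℤ)

/-- `f : ℚ_p → ℚ_p` is locally analytic on `ℤ_p`: around every point of `ℤ_p` it is the sum
of a convergent power series on some closed ball of positive radius. -/
def LocallyAnalyticOn (p : ℕ) [Fact p.Prime] (f : ℚ_[p] → ℚ_[p]) : Prop :=
  ∀ x₀ : ℤ_[p], ∃ r : ℝ, 0 < r ∧ ∃ a : ℕ → ℚ_[p],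
    ∀ x : ℚ_[p], ‖x - (x₀ : ℚ_[p])‖ ≤ r →
      HasSum (fun n : ℕ => a n * (x - (x₀ : ℚ_[p])) ^ n) (f x)

/-- `n` is a positive integer in the congruence class `[a]_d`. -/
def inClass (a d n : ℕ) : Prop := 0 < n ∧ n ≡ a [MOD d]

/-- The class `[a]_d` is constant with respect to the sequence `c` and the prime `p`:
`v_p(c n)` is the same for all `n ∈ [a]_d`. -/
def ConstantClassP (p : ℕ) [Fact p.Prime] (c : ℕ → ℚ_[p]) (a d : ℕ) : Prop :=
  ∃ t : WithTop ℤ, ∀ n : ℕ, inClass a d n → vpQp p (c n) = t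

namespace Stmt4Aux
variable {p : ℕ} [hp : Fact p.Prime]

noncomputable def rp (p : ℕ) (m : ℕ) : ℝ := (p : ℝ) ^ (-(m : ℤ))

lemma one_lt_p : (1:ℝ) < (p:ℝ) := by exact_mod_cast hp.out.one_lt
lemma p_pos : (0:ℝ) < (p:ℝ) := lt_trans one_pos one_lt_p
lemma rp_pos (m : ℕ) : 0 < rp p m := zpow_pos p_pos _
lemma rp_le_one (m : ℕ) : rp p m ≤ 1 := by
  rw [rp, ← zpow_zero (p:ℝ)]
  exact zpow_le_zpow_right₀ (le_of_lt one_lt_p) (by omega)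
lemma rp_anti {m m' : ℕ} (h : m ≤ m') : rp p m' ≤ rp p m :=
  zpow_le_zpow_right₀ (le_of_lt one_lt_p) (by omega)

lemma exists_rp_lt (ε : ℝ) (hε : 0 < ε) : ∃ m : ℕ, rp p m < ε := by
  obtain ⟨m, hm⟩ := exists_pow_lt_of_lt_one hε
    (show (p:ℝ)⁻¹ < 1 from inv_lt_one_of_one_lt₀ one_lt_p)
  exact ⟨m, by rwa [rp, zpow_neg, zpow_natCast, ← inv_pow]⟩

lemma vpQp_of_norm {x : ℚ_[p]} {v : ℤ} (h : ‖x‖ = (p:ℝ)^(-v)) :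
    x ≠ 0 ∧ vpQp p x = (v : WithTop ℤ) := by
  have hx : x ≠ 0 := by
    intro h0; rw [h0, norm_zero] at h
    exact absurd h.symm (ne_of_gt (zpow_pos p_pos _))
  refine ⟨hx, ?_⟩
  rw [vpQp, if_neg hx]
  norm_cast
  have h2 := Padic.norm_eq_zpow_neg_valuation hx
  rw [h2] at h
  have := zpow_right_injective₀ p_pos
    (show (p:ℝ) ≠ 1 from ne_of_gt (one_lt_p (p:=p))) h
  omega

lemma nsmul_coe (k : ℕ) (w : ℤ) : k • ((w : WithTop ℤ)) = ((k * w : ℤ) : WithTop ℤ) := by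
  induction k with
  | zero => simp
  | succ n ih =>
      rw [succ_nsmul, ih]
      have : ((n:ℤ) + 1) * w = n * w + w := by ring
      push_cast [this]
      rfl

lemma nsmul_topz {k : ℕ} (hk : k ≠ 0) : k • (⊤ : WithTop ℤ) = ⊤ := by
  cases k with
  | zero => omega
  | succ n => rw [succ_nsmul]; exact add_top _

lemma norm_add_left {x y : ℚ_[p]} (h : ‖y‖ < ‖x‖) : ‖x + y‖ = ‖x‖ := by
  rw [Padic.add_eq_max_of_ne (ne_of_gt h), max_eq_left (le_of_lt h)]

lemma keyLocal (f : ℚ_[p] → ℚ_[p]) (hf : LocallyAnalyticOn p f) (x₀ : ℤ_[p]) :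
    ∃ m : ℕ,
      (∀ x : ℚ_[p], ‖x - (x₀ : ℚ_[p])‖ ≤ rp p m → f x = 0) ∨
      (∃ c : ℚ_[p], c ≠ 0 ∧ ∃ k : ℕ, ∀ x : ℚ_[p], ‖x - (x₀ : ℚ_[p])‖ ≤ rp p m →
        vpQp p (f x) = vpQp p c + k • vpQp p (x - (x₀ : ℚ_[p]))) := by
  obtain ⟨r, hr, a, ha⟩ := hf x₀
  obtain ⟨m₁, hm₁⟩ := exists_rp_lt (p := p) r hr
  have ha' : ∀ x : ℚ_[p], ‖x - (x₀ : ℚ_[p])‖ ≤ rp p m₁ →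
      HasSum (fun n : ℕ => a n * (x - (x₀ : ℚ_[p])) ^ n) (f x) :=
    fun x hx => ha x (le_trans hx (le_of_lt hm₁))
  by_cases hzero : ∀ n, a n = 0
  · refine ⟨m₁, Or.inl fun x hx => ?_⟩
    have h1 := ha' x hx
    have h2 : HasSum (fun n : ℕ => a n * (x - (x₀ : ℚ_[p])) ^ n) 0 := by
      convert hasSum_zero with n
      rw [hzero n, zero_mul]
    exact h1.unique h2
  · push_neg at hzero
    set k := Nat.find hzero with hk
    have hak : a k ≠ 0 := Nat.find_spec hzero
    have hmin : ∀ j, j < k → a j = 0 := by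
      intro j hj
      have := Nat.find_min hzero (by omega : j < Nat.find hzero)
      simpa using this
    -- bound on coefficients
    have hy₀ : ‖(x₀:ℚ_[p]) + (p:ℚ_[p])^m₁ - (x₀ : ℚ_[p])‖ ≤ rp p m₁ := by
      rw [add_sub_cancel_left, Padic.norm_p_pow]; exact le_refl _
    have hsum₀ := ha' _ hy₀
    rw [add_sub_cancel_left] at hsum₀
    have htend : Filter.Tendsto (fun n => ‖a n * ((p:ℚ_[p])^m₁) ^ n‖)
        Filter.atTop (nhds 0) := by
      have := hsum₀.summable.tendsto_atTop_zero
      simpa [norm_zero] using this.norm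
    obtain ⟨C, hC⟩ := htend.bddAbove_range
    have hCb : ∀ n : ℕ, ‖a n‖ * (rp p m₁) ^ n ≤ C := by
      intro n
      have h1 : ‖a n * ((p:ℚ_[p])^m₁) ^ n‖ ≤ C := hC (Set.mem_range_self n)
      rwa [norm_mul, norm_pow, Padic.norm_p_pow] at h1
    have hCpos : 0 < C :=
      lt_of_lt_of_le (mul_pos (norm_pos_iff.mpr hak) (pow_pos (rp_pos m₁) k)) (hCb k)
    set D : ℝ := C * ((p:ℝ) ^ m₁) ^ (k+1) with hD
    have hDpos : 0 < D := mul_pos hCpos (pow_pos (pow_pos p_pos _) _)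
    obtain ⟨m₂, hm₂⟩ := exists_rp_lt (p := p) (‖a k‖ / D)
      (div_pos (norm_pos_iff.mpr hak) hDpos)
    refine ⟨max m₁ m₂, Or.inr ⟨a k, hak, k, ?_⟩⟩
    intro x hx
    set y := x - (x₀:ℚ_[p]) with hy
    have hym : ‖y‖ ≤ rp p m₁ := le_trans hx (rp_anti (le_max_left _ _))
    have hyD : ‖y‖ < ‖a k‖ / D :=
      lt_of_le_of_lt (le_trans hx (rp_anti (le_max_right _ _))) hm₂
    have hsum := ha' x hym
    by_cases hy0 : y = 0
    · -- center case
      have hfx : f x = a 0 := by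
        have h1 : HasSum (fun n : ℕ => a n * y ^ n) ((fun n : ℕ => a n * y ^ n) 0) := by
          apply hasSum_single 0
          intro b hb
          rw [hy0, zero_pow hb, mul_zero]
        have h2 := hsum.unique h1
        simpa using h2
      rcases Nat.eq_zero_or_pos k with hk0 | hk1
      · rw [hfx, hy0]
        rw [hk0, zero_nsmul, add_zero]
      · have h00 : a 0 = 0 := hmin 0 hk1
        rw [hfx, h00, hy0]
        rw [show vpQp p (0:ℚ_[p]) = ⊤ from if_pos rfl]
        rw [nsmul_topz (by omega : k ≠ 0), add_top]
    · -- main case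
      set w := y.valuation with hw
      have hyn : ‖y‖ = (p:ℝ) ^ (-w) := Padic.norm_eq_zpow_neg_valuation hy0
      have hynpos : 0 < ‖y‖ := norm_pos_iff.mpr hy0
      set g : ℕ → ℚ_[p] := fun n => a n * y ^ n with hg
      have hupd : HasSum (Function.update g k 0) (0 - g k + f x) := hsum.update k 0
      set B : ℝ := D * ‖y‖ ^ (k+1) with hB
      have hBnn : 0 ≤ B := mul_nonneg (le_of_lt hDpos) (pow_nonneg (norm_nonneg y) _)
      -- uniform bound on the other terms
      set q : ℝ := (p:ℝ) ^ m₁ * ‖y‖ with hq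
      have hq0 : 0 ≤ q := mul_nonneg (le_of_lt (pow_pos p_pos m₁)) (norm_nonneg y)
      have hq1 : q ≤ 1 := by
        have h1 : (p:ℝ) ^ m₁ * ‖y‖ ≤ (p:ℝ) ^ m₁ * rp p m₁ :=
          mul_le_mul_of_nonneg_left hym (le_of_lt (pow_pos p_pos m₁))
        have h2 : (p:ℝ) ^ m₁ * rp p m₁ = 1 := by
          rw [rp, ← zpow_natCast (p:ℝ) m₁, ← zpow_add₀ (ne_of_gt p_pos)]
          simp
        rw [hq]; rw [h2] at h1; exact h1
      have hgn : ∀ n : ℕ, ‖g n‖ ≤ C * q ^ n := by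
        intro n
        have h1 : ‖g n‖ = ‖a n‖ * ‖y‖ ^ n := by
          rw [hg]; simp [norm_mul, norm_pow]
        have h2 : ‖a n‖ * ‖y‖ ^ n = (‖a n‖ * (rp p m₁) ^ n) * ((p:ℝ) ^ m₁ * ‖y‖) ^ n := by
          rw [mul_pow]
          have h30 : (rp p m₁) * ((p:ℝ) ^ m₁) = 1 := by
            rw [rp, ← zpow_natCast (p:ℝ) m₁, ← zpow_add₀ (ne_of_gt p_pos)]
            simp
          have h3 : (rp p m₁) ^ n * ((p:ℝ) ^ m₁) ^ n = 1 := by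
            rw [← mul_pow, h30, one_pow]
          calc ‖a n‖ * ‖y‖ ^ n = ‖a n‖ * (((rp p m₁) ^ n * ((p:ℝ) ^ m₁) ^ n) * ‖y‖ ^ n) := by
                rw [h3, one_mul]
            _ = ‖a n‖ * (rp p m₁) ^ n * (((p:ℝ) ^ m₁) ^ n * ‖y‖ ^ n) := by ring
        rw [h1, h2, hq]
        have := mul_le_mul_of_nonneg_right (hCb n) (pow_nonneg hq0 n)
        calc ‖a n‖ * rp p m₁ ^ n * ((p:ℝ) ^ m₁ * ‖y‖) ^ n
            ≤ C * ((p:ℝ) ^ m₁ * ‖y‖) ^ n := this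
          _ = C * q ^ n := by rw [hq]
      have hterm : ∀ n, ‖Function.update g k 0 n‖ ≤ B := by
        intro n
        rcases eq_or_ne n k with rfl | hnk
        · rw [Function.update_self, norm_zero]; exact hBnn
        · rw [Function.update_of_ne hnk]
          rcases lt_or_gt_of_ne hnk with h | h
          · have : g n = 0 := by rw [hg]; simp only; rw [hmin n h, zero_mul]
            rw [this, norm_zero]; exact hBnn
          · have h1 := hgn n
            have h2 : q ^ n ≤ q ^ (k+1) := pow_le_pow_of_le_one hq0 hq1 (by omega)
            have h3 : ‖g n‖ ≤ C * q ^ (k+1) :=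
              le_trans h1 (mul_le_mul_of_nonneg_left h2 (le_of_lt hCpos))
            have h4 : C * q ^ (k+1) = B := by
              rw [hB, hD, hq, mul_pow]; ring
            rwa [h4] at h3
      have hBlt : B < ‖g k‖ := by
        have h1 : ‖g k‖ = ‖a k‖ * ‖y‖ ^ k := by rw [hg]; simp [norm_mul, norm_pow]
        have h2 : B = (D * ‖y‖) * ‖y‖ ^ k := by rw [hB, pow_succ]; ring
        rw [h1, h2]
        apply mul_lt_mul_of_pos_right _ (pow_pos hynpos k)
        calc D * ‖y‖ < D * (‖a k‖ / D) := mul_lt_mul_of_pos_left hyD hDpos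
          _ = ‖a k‖ := by field_simp
      have hdiff : ‖f x - g k‖ ≤ B := by
        have h1 : f x - g k = ∑' n, Function.update g k 0 n := by
          rw [hupd.tsum_eq]; ring
        rw [h1]
        exact IsUltrametricDist.norm_tsum_le_of_forall_le_of_nonneg hBnn hterm
      have hnfx : ‖f x‖ = ‖a k‖ * ‖y‖ ^ k := by
        have h1 : f x = g k + (f x - g k) := by ring
        have h2 : ‖f x - g k‖ < ‖g k‖ := lt_of_le_of_lt hdiff hBlt
        rw [h1, norm_add_left h2, hg]
        simp [norm_mul, norm_pow]
      -- now convert to valuations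
      have hval : (-(a k).valuation) + (-w) * (k:ℤ) = -(((a k).valuation) + (k:ℤ) * w) := by
        ring
      have hpow : ‖f x‖ = (p:ℝ) ^ (-(((a k).valuation) + (k:ℤ) * w)) := by
        rw [hnfx, Padic.norm_eq_zpow_neg_valuation hak, hyn, ← zpow_natCast ((p:ℝ) ^ (-w)) k,
          ← zpow_mul, ← zpow_add₀ (ne_of_gt p_pos), hval]
      obtain ⟨hfx0, hvfx⟩ := vpQp_of_norm hpow
      rw [hvfx]
      rw [show vpQp p (a k) = ((a k).valuation : WithTop ℤ) from if_neg hak,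
        show vpQp p y = (w : WithTop ℤ) from if_neg hy0, nsmul_coe]
      rw [← WithTop.coe_add]

lemma rp_lt {m m' : ℕ} (h : m < m') : rp p m' < rp p m :=
  zpow_lt_zpow_right₀ one_lt_p (by omega)

lemma norm_ppow (m : ℕ) : ‖((p:ℚ_[p]))^m‖ = rp p m := Padic.norm_p_pow m

lemma norm_sub_iff_modeq {n a m : ℕ} : ‖(n:ℚ_[p]) - a‖ ≤ rp p m ↔ n ≡ a [MOD p^m] := by
  have h1 : ((n:ℚ_[p]) - a) = (((n:ℤ) - a : ℤ) : ℚ_[p]) := by push_cast; ring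
  rw [h1, rp, Padic.norm_int_le_pow_iff_dvd, Nat.modEq_iff_dvd]
  rw [show ((p:ℤ)^m) = ((p^m : ℕ) : ℤ) by push_cast; ring]
  exact ⟨fun h => dvd_sub_comm.mp h, fun h => dvd_sub_comm.mp h⟩

lemma exists_nat_approx (z : ℚ_[p]) (hz : ‖z‖ ≤ 1) (m : ℕ) :
    ∃ n : ℕ, 0 < n ∧ ‖(n:ℚ_[p]) - z‖ ≤ rp p m := by
  set z' : ℤ_[p] := ⟨z, hz⟩ with hz'
  have hspec := PadicInt.appr_spec m z'
  rw [← PadicInt.norm_le_pow_iff_mem_span_pow] at hspec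
  refine ⟨z'.appr m + p^m, by have := pow_pos hp.out.pos m; omega, ?_⟩
  have h0 : ‖((z'.appr m : ℚ_[p])) - z‖ ≤ rp p m := by
    have : ((z'.appr m : ℚ_[p])) - z = -((z' - z'.appr m : ℤ_[p]) : ℚ_[p]) := by
      rw [PadicInt.coe_sub, PadicInt.coe_natCast]; show _ = -(z - _); ring
    rw [this, norm_neg, ← PadicInt.norm_def]
    exact hspec
  have : ((z'.appr m + p^m : ℕ) : ℚ_[p]) - z = ((z'.appr m : ℚ_[p]) - z) + (p:ℚ_[p])^m := by
    push_cast; ring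
  rw [this]
  calc ‖((z'.appr m : ℚ_[p]) - z) + (p:ℚ_[p])^m‖ ≤ max _ _ := Padic.nonarchimedean _ _
    _ ≤ rp p m := max_le h0 (le_of_eq (norm_ppow m))

lemma vpQp_zero : vpQp p (0:ℚ_[p]) = ⊤ := if_pos rfl

lemma vpQp_ne (x : ℚ_[p]) (hx : x ≠ 0) : vpQp p x = (x.valuation : WithTop ℤ) := if_neg hx

lemma rhs_ne_top {c u : ℚ_[p]} (hc : c ≠ 0) (hu : u ≠ 0) (k : ℕ) :
    vpQp p c + k • vpQp p u ≠ ⊤ := by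
  rw [vpQp_ne c hc, vpQp_ne u hu, nsmul_coe, ← WithTop.coe_add]
  exact WithTop.coe_ne_top

lemma vpQp_congr_norm {u v : ℚ_[p]} (hv : v ≠ 0) (h : ‖u‖ = ‖v‖) : vpQp p u = vpQp p v := by
  have h2 : ‖u‖ = (p:ℝ) ^ (-v.valuation) := h.trans (Padic.norm_eq_zpow_neg_valuation hv)
  obtain ⟨hu, h3⟩ := vpQp_of_norm h2
  rw [h3, vpQp_ne v hv]

lemma norm_sub_triple {x z w : ℚ_[p]} {r : ℝ} (h1 : ‖x - z‖ ≤ r) (h2 : ‖z - w‖ ≤ r) :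
    ‖x - w‖ ≤ r := by
  have : x - w = (x - z) + (z - w) := by ring
  rw [this]
  exact le_trans (Padic.nonarchimedean _ _) (max_le h1 h2)

lemma globalStructure (f : ℚ_[p] → ℚ_[p]) (hf : LocallyAnalyticOn p f) :
    ∃ L : ℕ, 0 < L ∧ ∃ S : Finset ℚ_[p],
      (∀ s ∈ S, ‖s‖ ≤ 1) ∧
      (∀ s, s ∈ S → ∀ s', s' ∈ S → s ≠ s' → ¬ ‖s - s'‖ ≤ rp p L) ∧
      (∀ z : ℚ_[p], ‖z‖ ≤ 1 → ∀ m : ℕ, L ≤ m →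
        (∃ s ∈ S, ‖s - z‖ ≤ rp p m ∧ ∃ c : ℚ_[p], c ≠ 0 ∧ ∃ k : ℕ, 0 < k ∧
            ∀ x : ℚ_[p], ‖x - z‖ ≤ rp p m → vpQp p (f x) = vpQp p c + k • vpQp p (x - s)) ∨
        ((∀ s ∈ S, ¬ ‖s - z‖ ≤ rp p m) ∧ ∃ t : WithTop ℤ,
            ∀ x : ℚ_[p], ‖x - z‖ ≤ rp p m → vpQp p (f x) = t)) := by
  choose M hM using fun x₀ => keyLocal f hf x₀
  -- finite subcover
  set U : ℤ_[p] → Set ℤ_[p] := fun x₀ => {z : ℤ_[p] | ‖(z:ℚ_[p]) - (x₀:ℚ_[p])‖ < rp p (M x₀)}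
    with hU
  have hUopen : ∀ x₀, IsOpen (U x₀) := by
    intro x₀
    apply isOpen_lt _ continuous_const
    exact (continuous_subtype_val.sub continuous_const).norm
  have hcov : (Set.univ : Set ℤ_[p]) ⊆ ⋃ x₀ ∈ (Set.univ : Set ℤ_[p]), U x₀ := by
    intro z _
    simp only [Set.mem_iUnion]
    exact ⟨z, Set.mem_univ z, by simp [hU, rp_pos]⟩
  obtain ⟨T, hT⟩ := isCompact_univ.elim_finite_subcover_image
    (fun x₀ _ => hUopen x₀) hcov
  obtain ⟨hTsub, hTfin, hTcov⟩ := hT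
  set T' : Finset ℤ_[p] := hTfin.toFinset with hT'
  -- the finite set of "zero centers"
  set S : Finset ℚ_[p] :=
    (T'.filter (fun (x₁ : ℤ_[p]) => f (x₁ : ℚ_[p]) = 0 ∧
      ∃ y : ℚ_[p], ‖y - (x₁:ℚ_[p])‖ ≤ rp p (M x₁) ∧ f y ≠ 0)).image
      (fun (x₁ : ℤ_[p]) => (x₁ : ℚ_[p])) with hS
  have hSmem : ∀ s, s ∈ S → ∃ x₁ : ℤ_[p], x₁ ∈ T ∧ (x₁ : ℚ_[p]) = s ∧ f s = 0 ∧
      ∃ y : ℚ_[p], ‖y - s‖ ≤ rp p (M x₁) ∧ f y ≠ 0 := by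
    intro s hs
    rw [hS, Finset.mem_image] at hs
    obtain ⟨x₁, hx₁, hx₁s⟩ := hs
    rw [Finset.mem_filter] at hx₁
    obtain ⟨hx₁T, hf0, y, hy1, hy2⟩ := hx₁
    rw [hT', Set.Finite.mem_toFinset] at hx₁T
    exact ⟨x₁, hx₁T, hx₁s, by rw [← hx₁s]; exact hf0, y, by rw [← hx₁s]; exact hy1, hy2⟩
  -- choose L
  have hsepex : ∀ q : ℚ_[p] × ℚ_[p], ∃ j : ℕ, q.1 ≠ q.2 → rp p j < ‖q.1 - q.2‖ := by
    intro q
    by_cases h : q.1 = q.2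
    · exact ⟨0, fun hc => absurd h hc⟩
    · obtain ⟨j, hj⟩ := exists_rp_lt (p := p) ‖q.1 - q.2‖
        (norm_pos_iff.mpr (sub_ne_zero.mpr h))
      exact ⟨j, fun _ => hj⟩
  choose J hJ using hsepex
  set L : ℕ := max 1 (max (T'.sup M) ((S ×ˢ S).sup J)) with hL
  have hLM : ∀ x₀ : ℤ_[p], x₀ ∈ T → M x₀ ≤ L := by
    intro x₀ hx₀
    have : M x₀ ≤ T'.sup M :=
      Finset.le_sup (by rw [hT', Set.Finite.mem_toFinset]; exact hx₀)
    omega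
  refine ⟨L, by omega, S, ?_, ?_, ?_⟩
  · -- norms ≤ 1
    intro s hs
    obtain ⟨x₁, _, hx₁s, _⟩ := hSmem s hs
    rw [← hx₁s]
    exact x₁.2
  · -- separation
    intro s hs s' hs' hne hle
    have hJle : J (s, s') ≤ L := by
      have : J (s, s') ≤ (S ×ˢ S).sup J :=
        Finset.le_sup (Finset.mem_product.mpr ⟨hs, hs'⟩)
      omega
    have := hJ (s, s') hne
    have h2 : rp p L ≤ rp p (J (s, s')) := rp_anti hJle
    simp only at this
    linarith
  · -- main dichotomy
    intro z hz m hm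
    obtain ⟨x₀, hx₀T, hx₀z⟩ : ∃ x₀ : ℤ_[p], x₀ ∈ T ∧ ‖z - (x₀:ℚ_[p])‖ < rp p (M x₀) := by
      have := hTcov (Set.mem_univ (⟨z, hz⟩ : ℤ_[p]))
      have := Set.mem_iUnion₂.mp this
      obtain ⟨x₀, hx₀, hzU⟩ := this
      exact ⟨x₀, hx₀, hzU⟩
    have hzx₀ : ‖z - (x₀:ℚ_[p])‖ ≤ rp p (M x₀) := le_of_lt hx₀z
    have hball : ∀ x : ℚ_[p], ‖x - z‖ ≤ rp p m → ‖x - (x₀:ℚ_[p])‖ ≤ rp p (M x₀) := by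
      intro x hx
      apply norm_sub_triple _ hzx₀
      exact le_trans hx (le_trans (rp_anti hm) (rp_anti (hLM x₀ hx₀T)))
    rcases hM x₀ with hA | hB
    · -- case A : f ≡ 0 near x₀
      refine Or.inr ⟨?_, ⊤, fun x hx => by rw [hA x (hball x hx), vpQp_zero]⟩
      intro s hs hsz
      obtain ⟨x₁, hx₁T, hx₁s, hfs, y, hy1, hfy⟩ := hSmem s hs
      rcases hM x₁ with hA₁ | hB₁
      · exact hfy (hA₁ y (by rw [hx₁s]; exact hy1))
      · obtain ⟨c, hc, k, hform⟩ := hB₁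
        have hk : k ≠ 0 := by
          intro hk0
          have h1 := hform (x₁ : ℚ_[p]) (by rw [sub_self, norm_zero]; exact le_of_lt (rp_pos _))
          rw [sub_self, hk0, zero_nsmul, add_zero, hx₁s, hfs, vpQp_zero, vpQp_ne c hc] at h1
          exact WithTop.coe_ne_top h1.symm
        set j : ℕ := max m (M x₁) with hj
        have h1 : ‖(s + (p:ℚ_[p])^j) - z‖ ≤ rp p m := by
          have : (s + (p:ℚ_[p])^j) - z = ((p:ℚ_[p])^j) + (s - z) := by ring
          rw [this]
          refine le_trans (Padic.nonarchimedean _ _) (max_le ?_ hsz)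
          rw [Padic.norm_p_pow]
          exact rp_anti (le_max_left _ _)
        have h2 : f (s + (p:ℚ_[p])^j) = 0 := hA _ (hball _ h1)
        have h3 : ‖(s + (p:ℚ_[p])^j) - (x₁:ℚ_[p])‖ ≤ rp p (M x₁) := by
          rw [hx₁s, add_sub_cancel_left, Padic.norm_p_pow]
          exact rp_anti (le_max_right _ _)
        have h4 := hform _ h3
        rw [h2, vpQp_zero, hx₁s, add_sub_cancel_left] at h4
        exact rhs_ne_top hc (pow_ne_zero j (Nat.cast_ne_zero.mpr hp.out.ne_zero)) k h4.symm
    · -- case B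
      obtain ⟨c, hc, k, hform⟩ := hB
      rcases Nat.eq_zero_or_pos k with hk0 | hkpos
      · -- k = 0 : constant, no zeros
        refine Or.inr ⟨?_, vpQp p c, fun x hx => by
          rw [hform x (hball x hx), hk0, zero_nsmul, add_zero]⟩
        intro s hs hsz
        obtain ⟨x₁, hx₁T, hx₁s, hfs, _⟩ := hSmem s hs
        have h1 := hform s (hball s hsz)
        rw [hfs, vpQp_zero, hk0, zero_nsmul, add_zero, vpQp_ne c hc] at h1
        exact WithTop.coe_ne_top h1.symm
      · -- k ≥ 1 : x₀ is a zero
        have hfx₀ : f (x₀:ℚ_[p]) = 0 := by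
          have h1 := hform (x₀:ℚ_[p])
            (by rw [sub_self, norm_zero]; exact le_of_lt (rp_pos _))
          rw [sub_self, vpQp_zero, nsmul_topz (by omega : k ≠ 0), add_top] at h1
          by_contra hne
          rw [vpQp_ne _ hne] at h1
          exact WithTop.coe_ne_top h1
        have hx₀S : (x₀:ℚ_[p]) ∈ S := by
          rw [hS, Finset.mem_image]
          refine ⟨x₀, Finset.mem_filter.mpr ⟨by rw [hT', Set.Finite.mem_toFinset]; exact hx₀T,
            hfx₀, (x₀:ℚ_[p]) + (p:ℚ_[p])^(M x₀), ?_, ?_⟩, rfl⟩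
          · rw [add_sub_cancel_left, Padic.norm_p_pow]
            exact le_refl _
          · intro hfy
            have h1 := hform ((x₀:ℚ_[p]) + (p:ℚ_[p])^(M x₀))
              (by rw [add_sub_cancel_left, Padic.norm_p_pow]; exact le_refl _)
            rw [hfy, vpQp_zero, add_sub_cancel_left] at h1
            exact rhs_ne_top hc (pow_ne_zero _ (Nat.cast_ne_zero.mpr hp.out.ne_zero)) k h1.symm
        by_cases hin : ‖(x₀:ℚ_[p]) - z‖ ≤ rp p m
        · exact Or.inl ⟨(x₀:ℚ_[p]), hx₀S, hin, c, hc, k, hkpos,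
            fun x hx => hform x (hball x hx)⟩
        · refine Or.inr ⟨?_, ?_⟩
          · intro s hs hsz
            obtain ⟨x₁, hx₁T, hx₁s, hfs, _⟩ := hSmem s hs
            have h1 := hform s (hball s hsz)
            rw [hfs, vpQp_zero] at h1
            by_cases hsx₀ : s = (x₀:ℚ_[p])
            · rw [hsx₀] at hsz; exact hin hsz
            · exact rhs_ne_top hc (sub_ne_zero.mpr hsx₀) k h1.symm
          · refine ⟨vpQp p c + k • vpQp p (z - (x₀:ℚ_[p])), fun x hx => ?_⟩
            rw [hform x (hball x hx)]
            congr 1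
            congr 1
            apply vpQp_congr_norm (sub_ne_zero.mpr ?_)
            · -- ‖x - x₀‖ = ‖z - x₀‖
              have hzx : rp p m < ‖z - (x₀:ℚ_[p])‖ := lt_of_not_ge (fun hcon => hin ?_)
              · have : x - (x₀:ℚ_[p]) = (z - (x₀:ℚ_[p])) + (x - z) := by ring
                rw [this]
                exact norm_add_left (lt_of_le_of_lt hx hzx)
              · rwa [show (x₀:ℚ_[p]) - z = -(z - (x₀:ℚ_[p])) by ring, norm_neg]
            · intro hzx₀eq
              apply hin
              rw [show (x₀:ℚ_[p]) - z = -(z - (x₀:ℚ_[p])) by ring, norm_neg, hzx₀eq,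
                sub_self, norm_zero]
              exact le_of_lt (rp_pos _)

lemma val_ge_of_norm_le {x : ℚ_[p]} {m : ℕ} (hx : x ≠ 0) (h : ‖x‖ ≤ rp p m) :
    (m:ℤ) ≤ x.valuation := by
  rw [Padic.norm_eq_zpow_neg_valuation hx, rp] at h
  have := (zpow_le_zpow_iff_right₀ (one_lt_p (p:=p))).mp h
  omega

/-- sampling positive integers in a congruence class at prescribed distance from `s` -/
lemma sample {s : ℚ_[p]} (hs1 : ‖s‖ ≤ 1) (b μ j : ℕ) (hj : μ ≤ j)
    (hbs : ‖s - (b:ℚ_[p])‖ ≤ rp p μ) :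
    ∃ n : ℕ, inClass b (p^μ) n ∧ ((n:ℚ_[p]) - s ≠ 0) ∧
      vpQp p ((n:ℚ_[p]) - s) = ((j:ℤ) : WithTop ℤ) := by
  have hz1 : ‖s + (p:ℚ_[p])^j‖ ≤ 1 := by
    refine le_trans (Padic.nonarchimedean _ _) (max_le hs1 ?_)
    rw [Padic.norm_p_pow]
    exact rp_le_one j
  obtain ⟨n, hn0, hnz⟩ := exists_nat_approx (s + (p:ℚ_[p])^j) hz1 (j+1)
  have hns : ‖(n:ℚ_[p]) - s‖ = rp p j := by
    have h1 : (n:ℚ_[p]) - s = ((p:ℚ_[p])^j) + ((n:ℚ_[p]) - (s + (p:ℚ_[p])^j)) := by ring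
    rw [h1, norm_add_left]
    · exact Padic.norm_p_pow j
    · rw [Padic.norm_p_pow]
      exact lt_of_le_of_lt hnz (rp_lt (by omega))
  have hval := vpQp_of_norm (v := (j:ℤ)) (by rw [hns, rp])
  refine ⟨n, ⟨hn0, ?_⟩, hval.1, hval.2⟩
  rw [← norm_sub_iff_modeq]
  have h2 : (n:ℚ_[p]) - b = ((n:ℚ_[p]) - s) + (s - b) := by ring
  rw [h2]
  refine le_trans (Padic.nonarchimedean _ _) (max_le ?_ hbs)
  rw [hns]
  exact rp_anti hj

lemma tval_eq {c : ℚ_[p]} (hc : c ≠ 0) (k : ℕ) (j : ℤ) :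
    vpQp p c + k • ((j : WithTop ℤ)) = ((c.valuation + (k:ℤ) * j : ℤ) : WithTop ℤ) := by
  rw [vpQp_ne c hc, nsmul_coe, ← WithTop.coe_add]

/-- a class whose ball carries the `c (x-s)^k` valuation profile is non-constant -/
lemma nonconst {f : ℚ_[p] → ℚ_[p]} {s c : ℚ_[p]} {k : ℕ} (hs1 : ‖s‖ ≤ 1) (b μ : ℕ)
    (hc : c ≠ 0) (hk : 0 < k) (hbs : ‖s - (b:ℚ_[p])‖ ≤ rp p μ)
    (hform : ∀ x : ℚ_[p], ‖x - (b:ℚ_[p])‖ ≤ rp p μ →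
      vpQp p (f x) = vpQp p c + k • vpQp p (x - s)) :
    ¬ ConstantClassP p (fun n : ℕ => f (n : ℚ_[p])) b (p^μ) := by
  rintro ⟨t, ht⟩
  obtain ⟨n₁, hn₁c, hn₁0, hn₁v⟩ := sample hs1 b μ μ (le_refl _) hbs
  obtain ⟨n₂, hn₂c, hn₂0, hn₂v⟩ := sample hs1 b μ (μ+1) (by omega) hbs
  have hb₁ : ‖(n₁:ℚ_[p]) - b‖ ≤ rp p μ := norm_sub_iff_modeq.mpr hn₁c.2
  have hb₂ : ‖(n₂:ℚ_[p]) - b‖ ≤ rp p μ := norm_sub_iff_modeq.mpr hn₂c.2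
  have h1 := ht n₁ hn₁c
  have h2 := ht n₂ hn₂c
  simp only at h1 h2
  rw [hform _ hb₁, hn₁v, tval_eq hc] at h1
  rw [hform _ hb₂, hn₂v, tval_eq hc] at h2
  rw [← h2] at h1
  have := WithTop.coe_injective h1
  push_cast at this
  have hkm : (k:ℤ) * ((μ:ℤ)+1) = k * μ + k := by ring
  omega

/-- digit extraction -/
lemma digit {a n m : ℕ} (h : n ≡ a [MOD p^m]) :
    ∃ i₀ : ℕ, i₀ < p ∧ n ≡ a + i₀ * p^m [MOD p^(m+1)] := by
  have hp0 : (0:ℤ) < (p:ℤ) := by exact_mod_cast hp.out.pos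
  obtain ⟨q, hq⟩ : ((p:ℤ)^m) ∣ ((a:ℤ) - n) := by
    have := (Nat.modEq_iff_dvd (n := p^m)).mp h
    rwa [show ((p^m : ℕ):ℤ) = (p:ℤ)^m by push_cast; ring] at this
  set r : ℤ := (-q) % p with hr
  have hr0 : 0 ≤ r := Int.emod_nonneg _ (ne_of_gt hp0)
  have hrp : r < p := Int.emod_lt_of_pos _ hp0
  refine ⟨r.toNat, by omega, ?_⟩
  rw [Nat.modEq_iff_dvd]
  have hqr : (p:ℤ) ∣ (q + r) := by
    have hdef : r = -q - (p:ℤ) * ((-q) / p) := by rw [hr, Int.emod_def]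
    exact ⟨-((-q)/p), by rw [hdef]; ring⟩
  obtain ⟨w, hw⟩ := hqr
  push_cast
  rw [show (r.toNat : ℤ) = r by omega]
  refine ⟨w, ?_⟩
  have : (a:ℤ) + r * p^m - n = (q + r) * p^m := by linear_combination hq
  rw [this, hw]
  push_cast
  ring

lemma norm_nat_le_one (a : ℕ) : ‖((a:ℕ):ℚ_[p])‖ ≤ 1 := by
  have : ((a:ℕ):ℚ_[p]) = ((a:ℤ):ℚ_[p]) := by push_cast; ring
  rw [this]
  exact Padic.norm_int_le_one _

lemma off_digit_norm {a i i₀ m n nst : ℕ} (hi : i < p) (hi₀ : i₀ < p) (hne : i ≠ i₀)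
    (hn : n ≡ a + i * p^m [MOD p^(m+1)]) (hnst : nst ≡ a + i₀ * p^m [MOD p^(m+1)]) :
    ‖(n:ℚ_[p]) - nst‖ = rp p m := by
  obtain ⟨u, hu⟩ : ((p:ℤ)^(m+1)) ∣ ((a + i * p^m : ℕ) : ℤ) - n := by
    have := (Nat.modEq_iff_dvd (n := p^(m+1))).mp hn
    rwa [show ((p^(m+1) : ℕ):ℤ) = (p:ℤ)^(m+1) by push_cast; ring] at this
  obtain ⟨v, hv⟩ : ((p:ℤ)^(m+1)) ∣ ((a + i₀ * p^m : ℕ) : ℤ) - nst := by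
    have := (Nat.modEq_iff_dvd (n := p^(m+1))).mp hnst
    rwa [show ((p^(m+1) : ℕ):ℤ) = (p:ℤ)^(m+1) by push_cast; ring] at this
  have hkey : (n:ℚ_[p]) - nst =
      (((i:ℤ) - i₀ : ℤ):ℚ_[p]) * (p:ℚ_[p])^m + (((p:ℤ)^(m+1) * (v - u) : ℤ):ℚ_[p]) := by
    have hz : (n:ℤ) - nst = ((i:ℤ) - i₀) * (p:ℤ)^m + ((p:ℤ)^(m+1) * (v - u)) := by
      push_cast at hu hv ⊢
      linarith [hu, hv]
    have : (n:ℚ_[p]) - nst = (((n:ℤ) - nst : ℤ) : ℚ_[p]) := by push_cast; ring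
    rw [this, hz]
    push_cast
    ring
  have hnd : ¬ ((p:ℤ) ∣ ((i:ℤ) - i₀)) := by
    intro hd
    have h1 : (p:ℤ) ∣ |(i:ℤ) - i₀| := (dvd_abs _ _).mpr hd
    have hzz : (i:ℤ) - i₀ ≠ 0 := by
      intro hz
      apply hne
      omega
    have h2 : (0:ℤ) < |(i:ℤ) - i₀| := abs_pos.mpr hzz
    have h3 := Int.le_of_dvd h2 h1
    have hlt : |(i:ℤ) - i₀| < (p:ℤ) := abs_lt.mpr ⟨by omega, by omega⟩
    omega
  have hn1 : ‖(((i:ℤ) - i₀ : ℤ):ℚ_[p])‖ = 1 := by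
    refine le_antisymm (Padic.norm_int_le_one _) ?_
    by_contra hlt
    push_neg at hlt
    exact hnd (Padic.norm_intCast_lt_one_iff.mp hlt)
  have hmain : ‖(((i:ℤ) - i₀ : ℤ):ℚ_[p]) * (p:ℚ_[p])^m‖ = rp p m := by
    rw [norm_mul, hn1, one_mul, Padic.norm_p_pow, rp]
  have hlt2 : ‖(((p:ℤ)^(m+1) * (v - u) : ℤ):ℚ_[p])‖ <
      ‖(((i:ℤ) - i₀ : ℤ):ℚ_[p]) * (p:ℚ_[p])^m‖ := by
    rw [hmain]
    calc ‖(((p:ℤ)^(m+1) * (v - u) : ℤ):ℚ_[p])‖ ≤ rp p (m+1) := by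
          rw [rp]
          exact (Padic.norm_int_le_pow_iff_dvd _ _).mpr ⟨v - u, rfl⟩
      _ < rp p m := rp_lt (by omega)
  rw [hkey, norm_add_left hlt2, hmain]

lemma isLeast_profile {f : ℚ_[p] → ℚ_[p]} {s c : ℚ_[p]} {k : ℕ} (hs1 : ‖s‖ ≤ 1) (hc : c ≠ 0)
    (hk : 0 < k) (b μ : ℕ) (hbs : ‖s - (b:ℚ_[p])‖ ≤ rp p μ)
    (hform : ∀ x : ℚ_[p], ‖x - (b:ℚ_[p])‖ ≤ rp p μ →
      vpQp p (f x) = vpQp p c + k • vpQp p (x - s)) :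
    IsLeast {w : WithTop ℤ | ∃ n : ℕ, inClass b (p^μ) n ∧ vpQp p (f (n:ℚ_[p])) = w}
      (((c.valuation + (k:ℤ) * μ : ℤ) : WithTop ℤ)) := by
  constructor
  · obtain ⟨n, hnc, hn0, hnv⟩ := sample hs1 b μ μ (le_refl _) hbs
    refine ⟨n, hnc, ?_⟩
    rw [hform _ (norm_sub_iff_modeq.mpr hnc.2), hnv, tval_eq hc]
  · rintro w ⟨n, hnc, rfl⟩
    have hb : ‖(n:ℚ_[p]) - b‖ ≤ rp p μ := norm_sub_iff_modeq.mpr hnc.2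
    have hns : ‖(n:ℚ_[p]) - s‖ ≤ rp p μ := by
      apply norm_sub_triple hb
      rwa [show (b:ℚ_[p]) - s = -(s - b) by ring, norm_neg]
    rw [hform _ hb]
    by_cases h0 : (n:ℚ_[p]) - s = 0
    · rw [h0, vpQp_zero, nsmul_topz (by omega : k ≠ 0), add_top]
      exact le_top
    · have hval : (μ:ℤ) ≤ ((n:ℚ_[p]) - s).valuation := val_ge_of_norm_le h0 hns
      rw [vpQp_ne _ h0, tval_eq hc]
      rw [WithTop.coe_le_coe]
      have : (k:ℤ) * μ ≤ (k:ℤ) * ((n:ℚ_[p]) - s).valuation :=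
        mul_le_mul_of_nonneg_left hval (by positivity)
      omega

end Stmt4Aux

open Stmt4Aux in
theorem stmt4 (p : ℕ) [Fact p.Prime] (f : ℚ_[p] → ℚ_[p]) (hf : LocallyAnalyticOn p f) :
    ∃ m₀ : ℕ, 0 < m₀ ∧ ∃ μ : ℕ, ∀ m : ℕ, m₀ ≤ m →
      ({a : ℕ | a < p ^ m ∧ ¬ ConstantClassP p (fun n => f (n : ℚ_[p])) a (p ^ m)}.ncard = μ ∧
      ∀ a : ℕ, ¬ ConstantClassP p (fun n => f (n : ℚ_[p])) a (p ^ m) →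
        -- `t` is the minimum of the valuations on the class `[a]_{p^m}`
        ∃ t : WithTop ℤ,
          IsLeast {v : WithTop ℤ | ∃ n : ℕ, inClass a (p ^ m) n ∧ vpQp p (f (n : ℚ_[p])) = v} t ∧
          ∃ i₀ : ℕ, i₀ < p ∧
            -- the other `p - 1` subclasses mod `p^(m+1)` are constant with valuation `t`
            (∀ i : ℕ, i < p → i ≠ i₀ →
              ∀ n : ℕ, inClass (a + i * p ^ m) (p ^ (m + 1)) n →
                vpQp p (f (n : ℚ_[p])) = t) ∧
            -- one subclass is non-constant, with strictly larger minimal valuation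
            (¬ ConstantClassP p (fun n => f (n : ℚ_[p])) (a + i₀ * p ^ m) (p ^ (m + 1))) ∧
            ∃ t' : WithTop ℤ,
              IsLeast {v : WithTop ℤ | ∃ n : ℕ,
                inClass (a + i₀ * p ^ m) (p ^ (m + 1)) n ∧ vpQp p (f (n : ℚ_[p])) = v} t' ∧
              t < t') := by
  obtain ⟨L, hL1, S, hSnorm, hSsep, hdicho⟩ := globalStructure f hf
  refine ⟨L, hL1, S.card, fun m hm => ⟨?_, ?_⟩⟩
  · -- counting part
    classical
    set g : ℚ_[p] → ℕ :=
      fun s => if hs : ‖s‖ ≤ 1 then (PadicInt.appr ⟨s, hs⟩ m) else 0 with hg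
    have hgs : ∀ s ∈ (S : Set ℚ_[p]), g s < p^m ∧ ‖((g s : ℕ):ℚ_[p]) - s‖ ≤ rp p m := by
      intro s hs
      have hs1 : ‖s‖ ≤ 1 := hSnorm s hs
      set sZ : ℤ_[p] := ⟨s, hs1⟩ with hsZ
      have hg1 : g s = PadicInt.appr sZ m := by rw [hg]; simp [hs1, hsZ]
      constructor
      · rw [hg1]; exact PadicInt.appr_lt _ _
      · have hspec := PadicInt.appr_spec m sZ
        rw [← PadicInt.norm_le_pow_iff_mem_span_pow] at hspec
        have hcoe : (sZ : ℚ_[p]) = s := rfl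
        have : ((g s : ℕ):ℚ_[p]) - s
            = -(((sZ - ((PadicInt.appr sZ m : ℕ) : ℤ_[p]) : ℤ_[p])) : ℚ_[p]) := by
          rw [hg1, ← hcoe]; push_cast; ring
        rw [this, norm_neg, ← PadicInt.norm_def]
        exact hspec
    have hAeq : {a : ℕ | a < p ^ m ∧ ¬ ConstantClassP p (fun n => f (n : ℚ_[p])) a (p ^ m)}
        = g '' (S : Set ℚ_[p]) := by
      ext a
      simp only [Set.mem_setOf_eq, Set.mem_image, Finset.mem_coe]
      constructor
      · rintro ⟨hap, hnc⟩
        rcases hdicho (a:ℚ_[p]) (norm_nat_le_one a) m hm with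
          ⟨s, hsS, hsa, c, hc, k, hk, hform⟩ | ⟨_, t, hconst⟩
        · refine ⟨s, hsS, ?_⟩
          obtain ⟨hglt, hgnorm⟩ := hgs s hsS
          have h1 : ‖((g s : ℕ):ℚ_[p]) - (a:ℚ_[p])‖ ≤ rp p m :=
            norm_sub_triple hgnorm hsa
          have h2 : g s ≡ a [MOD p^m] := norm_sub_iff_modeq.mp h1
          have h3 := h2
          unfold Nat.ModEq at h3
          rw [Nat.mod_eq_of_lt hglt, Nat.mod_eq_of_lt hap] at h3
          exact h3
        · exact absurd ⟨t, fun n hn => hconst (n:ℚ_[p]) (norm_sub_iff_modeq.mpr hn.2)⟩ hnc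
      · rintro ⟨s, hsS, rfl⟩
        obtain ⟨hglt, hgnorm⟩ := hgs s hsS
        refine ⟨hglt, ?_⟩
        have hsg : ‖s - ((g s : ℕ):ℚ_[p])‖ ≤ rp p m := by
          rwa [show s - ((g s : ℕ):ℚ_[p]) = -(((g s : ℕ):ℚ_[p]) - s) by ring, norm_neg]
        rcases hdicho ((g s : ℕ):ℚ_[p]) (norm_nat_le_one _) m hm with
          ⟨s', hs'S, hs'g, c, hc, k, hk, hform⟩ | ⟨hnone, _⟩
        · exact nonconst (hSnorm s' hs'S) (g s) m hc hk hs'g hform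
        · exact absurd hsg (hnone s hsS)
    have hinj : Set.InjOn g (S : Set ℚ_[p]) := by
      intro s hs s' hs' hgeq
      by_contra hne
      apply hSsep s (by exact_mod_cast hs) s' (by exact_mod_cast hs') hne
      have h1 := (hgs s hs).2
      have h2 := (hgs s' hs').2
      have h3 : s - s' = -(((g s : ℕ):ℚ_[p]) - s) + (((g s' : ℕ):ℚ_[p]) - s') := by
        rw [show ((g s : ℕ):ℚ_[p]) = ((g s' : ℕ):ℚ_[p]) by rw [hgeq]]
        ring
      have h4 : ‖s - s'‖ ≤ rp p m := by
        rw [h3]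
        exact le_trans (Padic.nonarchimedean _ _)
          (max_le (by rwa [norm_neg]) h2)
      exact le_trans h4 (rp_anti hm)
    rw [hAeq, Set.ncard_image_of_injOn hinj, Set.ncard_coe_finset]
  · -- structure part
    intro a hnc
    rcases hdicho (a:ℚ_[p]) (norm_nat_le_one a) m hm with
      ⟨s, hsS, hsa, c, hc, k, hk, hform⟩ | ⟨_, t, hconst⟩
    swap
    · exact absurd ⟨t, fun n hn => hconst (n:ℚ_[p]) (norm_sub_iff_modeq.mpr hn.2)⟩ hnc
    have hs1 : ‖s‖ ≤ 1 := hSnorm s hsS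
    refine ⟨((c.valuation + (k:ℤ) * m : ℤ) : WithTop ℤ),
      isLeast_profile hs1 hc hk a m hsa hform, ?_⟩
    -- approximate s mod p^(m+1) by a positive integer
    obtain ⟨nst, hnst0, hnstn⟩ := exists_nat_approx s hs1 (m+1)
    have hnsta : nst ≡ a [MOD p^m] := by
      rw [← norm_sub_iff_modeq]
      refine norm_sub_triple (le_trans hnstn (rp_anti (by omega))) ?_
      rwa [show s - (a:ℚ_[p]) = s - a by ring] at hsa
    obtain ⟨i₀, hi₀p, hdig⟩ := digit (p := p) hnsta
    have hbmod : a + i₀ * p^m ≡ a [MOD p^m] := by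
      have : i₀ * p^m ≡ 0 [MOD p^m] := Nat.modEq_zero_iff_dvd.mpr (dvd_mul_left _ _)
      simpa using (Nat.ModEq.add_left a this)
    refine ⟨i₀, hi₀p, ?_, ?_, ?_⟩
    · -- other subclasses are constant with value t
      intro i hip hii₀ n hn
      have himod : a + i * p^m ≡ a [MOD p^m] := by
        have : i * p^m ≡ 0 [MOD p^m] := Nat.modEq_zero_iff_dvd.mpr (dvd_mul_left _ _)
        simpa using (Nat.ModEq.add_left a this)
      have hna : n ≡ a [MOD p^m] := by
        rw [← norm_sub_iff_modeq]
        refine norm_sub_triple (x := (n:ℚ_[p])) (z := ((a + i * p^m : ℕ):ℚ_[p])) ?_ ?_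
        · exact le_trans (norm_sub_iff_modeq.mpr hn.2) (rp_anti (by omega))
        · exact norm_sub_iff_modeq.mpr himod
      have hnn : ‖(n:ℚ_[p]) - nst‖ = rp p m := off_digit_norm hip hi₀p hii₀ hn.2 hdig
      have hns : ‖(n:ℚ_[p]) - s‖ = rp p m := by
        have h1 : (n:ℚ_[p]) - s = ((n:ℚ_[p]) - nst) + ((nst:ℚ_[p]) - s) := by ring
        rw [h1, norm_add_left, hnn]
        rw [hnn]
        exact lt_of_le_of_lt hnstn (rp_lt (by omega))
      have hval := vpQp_of_norm (v := (m:ℤ)) (by rw [hns, rp])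
      rw [hform _ (norm_sub_iff_modeq.mpr hna), hval.2, tval_eq hc]
    · -- non-constant subclass
      apply nonconst hs1 (a + i₀ * p^m) (m+1) hc hk ?_ ?_
      · -- ‖s - (a + i₀ p^m)‖ ≤ rp (m+1)
        refine norm_sub_triple (z := (nst:ℚ_[p])) ?_ ?_
        · rwa [show s - (nst:ℚ_[p]) = -((nst:ℚ_[p]) - s) by ring, norm_neg]
        · exact norm_sub_iff_modeq.mpr hdig
      · intro x hx
        apply hform
        refine norm_sub_triple (z := ((a + i₀ * p^m : ℕ):ℚ_[p])) ?_ ?_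
        · exact le_trans hx (rp_anti (by omega))
        · exact le_trans (norm_sub_iff_modeq.mpr hbmod) (le_refl _)
    · -- strictly larger minimum on subclass i₀
      have hbs' : ‖s - ((a + i₀ * p^m : ℕ):ℚ_[p])‖ ≤ rp p (m+1) := by
        refine norm_sub_triple (z := (nst:ℚ_[p])) ?_ ?_
        · rwa [show s - (nst:ℚ_[p]) = -((nst:ℚ_[p]) - s) by ring, norm_neg]
        · exact norm_sub_iff_modeq.mpr hdig
      have hform' : ∀ x : ℚ_[p], ‖x - ((a + i₀ * p^m : ℕ):ℚ_[p])‖ ≤ rp p (m+1) →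
          vpQp p (f x) = vpQp p c + k • vpQp p (x - s) := by
        intro x hx
        apply hform
        refine norm_sub_triple (z := ((a + i₀ * p^m : ℕ):ℚ_[p])) ?_ ?_
        · exact le_trans hx (rp_anti (by omega))
        · exact norm_sub_iff_modeq.mpr hbmod
      refine ⟨((c.valuation + (k:ℤ) * (m+1) : ℤ) : WithTop ℤ),
        isLeast_profile hs1 hc hk (a + i₀ * p^m) (m+1) hbs' hform', ?_⟩
      rw [WithTop.coe_lt_coe]
      have h1 : (k:ℤ) * ((m:ℤ)+1) = (k:ℤ) * m + k := by ring
      push_cast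
      omega
end

section
/- Let p be a prime and let f : ℚ_p → ℚ_p be locally analytic on ℤ_p. Then there exists a positive integer m₀ such that for each congruence class [a]_{p^{m₀}} modulo p^{m₀} that is non-constant with respect to the sequence (f(n))_{n∈ℕ₊} and the prime p, there exist an integer β, a positive integer l, and x₀ ∈ ℤ_p such that v_p(f(n)) = β + l·v_p(n − x₀) for every positive integer n ≡ a (mod p^{m₀}). -/
open scoped Classical

/-- `p`-adic valuation of a `p`-adic integer, with `v_p(0) = ⊤`. -/
noncomputable def vpZp (p : ℕ) [Fact p.Prime] (x : ℤ_[p]) : WithTop ℤ :=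
  if x = 0 then ⊤ else (x.valuation : WithTop ℤ)

private lemma padic_val_eq_of_norm_eq {p : ℕ} [Fact p.Prime] {z w : ℚ_[p]} (hz : z ≠ 0)
    (hw : w ≠ 0) (h : ‖z‖ = ‖w‖) : z.valuation = w.valuation := by
  rw [Padic.norm_eq_zpow_neg_valuation hz, Padic.norm_eq_zpow_neg_valuation hw] at h
  exact neg_injective (zpow_right_injective₀
    (by exact_mod_cast (Fact.out : p.Prime).pos)
    (by exact_mod_cast (Fact.out : p.Prime).ne_one) h)

private lemma padic_val_pow {p : ℕ} [Fact p.Prime] {z : ℚ_[p]} (hz : z ≠ 0) (l : ℕ) :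
    (z ^ l).valuation = l * z.valuation := by
  induction l with
  | zero => simp [Padic.valuation_one]
  | succ n ih =>
      rw [pow_succ, Padic.valuation_mul (pow_ne_zero _ hz) hz, ih]
      push_cast; ring

private lemma local_struct (p : ℕ) [Fact p.Prime] (f : ℚ_[p] → ℚ_[p]) (x₀ : ℤ_[p]) (r : ℝ)
    (hr : 0 < r) (a : ℕ → ℚ_[p])
    (hs : ∀ x : ℚ_[p], ‖x - (x₀ : ℚ_[p])‖ ≤ r →
      HasSum (fun n : ℕ => a n * (x - (x₀ : ℚ_[p])) ^ n) (f x)) :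
    ∃ M : ℕ,
      ((∃ t, ∀ y : ℤ_[p], ‖y - x₀‖ ≤ (p : ℝ) ^ (-(M : ℤ)) → vpQp p (f y) = t) ∨
       (∃ β : ℤ, ∃ l : ℕ, 0 < l ∧ ∀ y : ℤ_[p], ‖y - x₀‖ ≤ (p : ℝ) ^ (-(M : ℤ)) →
         vpQp p (f y) = (β : WithTop ℤ) + ((l : ℤ) : WithTop ℤ) * vpZp p (y - x₀))) := by
  have hp : p.Prime := Fact.out
  have hp1 : (1 : ℝ) < p := by exact_mod_cast hp.one_lt
  have hp0 : (0 : ℝ) < p := lt_trans zero_lt_one hp1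
  have hρpos : ∀ k : ℕ, (0:ℝ) < (p:ℝ) ^ (-(k:ℤ)) := fun k => zpow_pos hp0 _
  have hρle1 : ∀ k : ℕ, (p:ℝ) ^ (-(k:ℤ)) ≤ 1 := fun k => by
    calc (p:ℝ) ^ (-(k:ℤ)) ≤ (p:ℝ) ^ (0:ℤ) := zpow_le_zpow_right₀ hp1.le (by omega)
    _ = 1 := zpow_zero _
  have hmono : ∀ {j k : ℕ}, j ≤ k → (p:ℝ) ^ (-(k:ℤ)) ≤ (p:ℝ) ^ (-(j:ℤ)) :=
    fun {j k} h => zpow_le_zpow_right₀ hp1.le (by omega)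
  obtain ⟨m, hmr⟩ : ∃ m : ℕ, (p:ℝ) ^ (-(m:ℤ)) ≤ r := by
    obtain ⟨n, hn⟩ := exists_pow_lt_of_lt_one hr (inv_lt_one_of_one_lt₀ hp1)
    exact ⟨n, by rw [zpow_neg, zpow_natCast, ← inv_pow]; exact hn.le⟩
  have hnorm : ∀ y : ℤ_[p], ‖(y : ℚ_[p]) - (x₀ : ℚ_[p])‖ = ‖y - x₀‖ := fun y => by
    rw [PadicInt.norm_def, PadicInt.coe_sub]
  by_cases hA : ∀ k, a k = 0
  · refine ⟨m, Or.inl ⟨⊤, fun y hy => ?_⟩⟩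
    have h1 := hs y (by rw [hnorm]; exact hy.trans hmr)
    simp only [hA, zero_mul] at h1
    have hf0 : f y = 0 := h1.unique hasSum_zero
    simp [vpQp, hf0]
  push_neg at hA
  set l := Nat.find hA with hldef
  have hal : a l ≠ 0 := Nat.find_spec hA
  have hal' : (0:ℝ) < ‖a l‖ := norm_pos_iff.mpr hal
  have halmin : ∀ k, k < l → a k = 0 := fun k hk => by
    by_contra h; exact (Nat.find_min hA hk) h
  -- convergence info at radius p^{-m}
  have hxm : ‖((x₀:ℚ_[p]) + (p:ℚ_[p])^m) - (x₀:ℚ_[p])‖ ≤ r := by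
    rw [add_sub_cancel_left, Padic.norm_p_pow]; exact hmr
  have hsum := hs _ hxm
  rw [add_sub_cancel_left] at hsum
  have htend := hsum.summable.tendsto_atTop_zero
  have hε : 0 < (p:ℝ)⁻¹ * ‖a l‖ * ((p:ℝ)^(-(m:ℤ)))^l := by positivity
  obtain ⟨K, hK⟩ := (Metric.tendsto_atTop.mp htend) _ hε
  have hKn : ∀ k, K ≤ k →
      ‖a k‖ * ((p:ℝ)^(-(m:ℤ)))^k < (p:ℝ)⁻¹ * ‖a l‖ * ((p:ℝ)^(-(m:ℤ)))^l := fun k hk => by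
    have h2 := hK k hk
    rwa [dist_zero_right, norm_mul, norm_pow, Padic.norm_p_pow] at h2
  set B : ℝ := ∑ k ∈ Finset.range K, ‖a k‖ with hBdef
  have hB0 : 0 ≤ B := Finset.sum_nonneg fun _ _ => norm_nonneg _
  have hBk : ∀ k, k < K → ‖a k‖ ≤ B := fun k hk =>
    Finset.single_le_sum (fun i _ => norm_nonneg (a i)) (Finset.mem_range.mpr hk)
  obtain ⟨N, hN⟩ : ∃ N : ℕ, B * (p:ℝ)^(-(N:ℤ)) ≤ (p:ℝ)⁻¹ * ‖a l‖ := by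
    have hq : 0 < ((p:ℝ)⁻¹ * ‖a l‖) / (B + 1) := by positivity
    obtain ⟨n, hn⟩ := exists_pow_lt_of_lt_one hq (inv_lt_one_of_one_lt₀ hp1)
    refine ⟨n, ?_⟩
    have h1 : (p:ℝ)^(-(n:ℤ)) < ((p:ℝ)⁻¹ * ‖a l‖) / (B+1) := by
      rw [zpow_neg, zpow_natCast, ← inv_pow]; exact hn
    have hB1 : (0:ℝ) < B + 1 := by linarith
    calc B * (p:ℝ)^(-(n:ℤ)) ≤ (B+1) * (p:ℝ)^(-(n:ℤ)) :=
          mul_le_mul_of_nonneg_right (by linarith) (hρpos n).le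
    _ ≤ (B+1) * (((p:ℝ)⁻¹ * ‖a l‖)/(B+1)) :=
          mul_le_mul_of_nonneg_left h1.le hB1.le
    _ = (p:ℝ)⁻¹ * ‖a l‖ := by field_simp
  set M : ℕ := max m N with hMdef
  have hMm : (p:ℝ)^(-(M:ℤ)) ≤ (p:ℝ)^(-(m:ℤ)) := hmono (le_max_left _ _)
  have hMN : (p:ℝ)^(-(M:ℤ)) ≤ (p:ℝ)^(-(N:ℤ)) := hmono (le_max_right _ _)
  have hdom : ∀ k, l < k → ‖a k‖ * ((p:ℝ)^(-(M:ℤ)))^(k-l) ≤ (p:ℝ)⁻¹ * ‖a l‖ := by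
    intro k hk
    rcases lt_or_ge k K with hkK | hkK
    · have h1 : ((p:ℝ)^(-(M:ℤ)))^(k-l) ≤ (p:ℝ)^(-(M:ℤ)) := by
        calc ((p:ℝ)^(-(M:ℤ)))^(k-l) ≤ ((p:ℝ)^(-(M:ℤ)))^1 :=
              pow_le_pow_of_le_one (hρpos M).le (hρle1 M) (by omega)
        _ = _ := pow_one _
      calc ‖a k‖ * ((p:ℝ)^(-(M:ℤ)))^(k-l) ≤ B * (p:ℝ)^(-(N:ℤ)) :=
            mul_le_mul (hBk k hkK) (h1.trans hMN) (pow_nonneg (hρpos M).le _) hB0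
      _ ≤ _ := hN
    · have h2 := hKn k hkK
      have hkl : k - l + l = k := Nat.sub_add_cancel (le_of_lt hk)
      have h3 : (‖a k‖ * ((p:ℝ)^(-(m:ℤ)))^(k-l)) * ((p:ℝ)^(-(m:ℤ)))^l <
          ((p:ℝ)⁻¹ * ‖a l‖) * ((p:ℝ)^(-(m:ℤ)))^l := by
        rw [mul_assoc, ← pow_add, hkl]
        calc ‖a k‖ * ((p:ℝ)^(-(m:ℤ)))^k < (p:ℝ)⁻¹ * ‖a l‖ * ((p:ℝ)^(-(m:ℤ)))^l := h2
        _ = ((p:ℝ)⁻¹ * ‖a l‖) * ((p:ℝ)^(-(m:ℤ)))^l := by ring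
      have h4 : ‖a k‖ * ((p:ℝ)^(-(m:ℤ)))^(k-l) < (p:ℝ)⁻¹ * ‖a l‖ :=
        lt_of_mul_lt_mul_right h3 (pow_pos (hρpos m) l).le
      have h5 : ((p:ℝ)^(-(M:ℤ)))^(k-l) ≤ ((p:ℝ)^(-(m:ℤ)))^(k-l) :=
        pow_le_pow_left₀ (hρpos M).le hMm _
      calc ‖a k‖ * ((p:ℝ)^(-(M:ℤ)))^(k-l) ≤ ‖a k‖ * ((p:ℝ)^(-(m:ℤ)))^(k-l) :=
            mul_le_mul_of_nonneg_left h5 (norm_nonneg _)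
      _ ≤ _ := h4.le
  have hest : ∀ y : ℤ_[p], ‖y - x₀‖ ≤ (p:ℝ)^(-(M:ℤ)) →
      ‖f y - a l * ((y:ℚ_[p]) - (x₀:ℚ_[p])) ^ l‖ ≤
        (p:ℝ)⁻¹ * ‖a l‖ * ‖(y:ℚ_[p]) - (x₀:ℚ_[p])‖ ^ l := by
    intro y hy
    have htM : ‖(y:ℚ_[p]) - (x₀:ℚ_[p])‖ ≤ (p:ℝ)^(-(M:ℤ)) := by rw [hnorm]; exact hy
    have h1 := hs ((y:ℤ_[p]):ℚ_[p]) (htM.trans (hMm.trans hmr))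
    have h2 : HasSum (fun k : ℕ => if k = l then a l * ((y:ℚ_[p]) - (x₀:ℚ_[p])) ^ l else 0)
        (a l * ((y:ℚ_[p]) - (x₀:ℚ_[p])) ^ l) := hasSum_ite_eq l _
    have h3 := h1.sub h2
    rw [← h3.tsum_eq]
    apply IsUltrametricDist.norm_tsum_le_of_forall_le_of_nonneg (by positivity)
    intro k
    by_cases hkl : k = l
    · subst hkl; rw [if_pos rfl, sub_self, norm_zero]
      positivity
    rcases lt_or_gt_of_ne hkl with hlt | hgt
    · simp only [if_neg hkl, halmin k hlt, zero_mul, zero_sub, norm_neg, norm_zero]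
      positivity
    · rw [if_neg hkl, sub_zero, norm_mul, norm_pow]
      have hsplit : ‖(y:ℚ_[p]) - (x₀:ℚ_[p])‖^k
          = ‖(y:ℚ_[p]) - (x₀:ℚ_[p])‖^(k-l) * ‖(y:ℚ_[p]) - (x₀:ℚ_[p])‖^l := by
        rw [← pow_add, Nat.sub_add_cancel hgt.le]
      rw [hsplit, ← mul_assoc]
      apply mul_le_mul_of_nonneg_right _ (pow_nonneg (norm_nonneg _) l)
      calc ‖a k‖ * ‖(y:ℚ_[p]) - (x₀:ℚ_[p])‖^(k-l)
          ≤ ‖a k‖ * ((p:ℝ)^(-(M:ℤ)))^(k-l) :=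
            mul_le_mul_of_nonneg_left (pow_le_pow_left₀ (norm_nonneg _) htM _) (norm_nonneg _)
      _ ≤ _ := hdom k hgt
  refine ⟨M, ?_⟩
  rcases Nat.eq_zero_or_pos l with hl0 | hlpos
  · left
    have ha0 : a 0 ≠ 0 := hl0 ▸ hal
    have ha0' : (0:ℝ) < ‖a 0‖ := norm_pos_iff.mpr ha0
    refine ⟨((a 0).valuation : WithTop ℤ), fun y hy => ?_⟩
    have h1 := hest y hy
    rw [hl0, pow_zero, mul_one, pow_zero, mul_one] at h1
    have hinv : (p:ℝ)⁻¹ < 1 := inv_lt_one_of_one_lt₀ hp1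
    have hlt0 : (p:ℝ)⁻¹ * ‖a 0‖ < ‖a 0‖ := by nlinarith
    have hlt : ‖f ↑y - a 0‖ < ‖a 0‖ := lt_of_le_of_lt h1 hlt0
    have heq : ‖f (↑y : ℚ_[p])‖ = ‖a 0‖ := by
      have hrw : f (↑y : ℚ_[p]) = (f ↑y - a 0) + a 0 := by ring
      rw [hrw, IsUltrametricDist.norm_add_eq_max_of_norm_ne_norm (ne_of_lt hlt),
        max_eq_right hlt.le]
    have hfy : f (↑y : ℚ_[p]) ≠ 0 := by
      intro h0; rw [h0, norm_zero] at heq; exact ha0 (norm_eq_zero.mp heq.symm)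
    rw [vpQp, if_neg hfy, padic_val_eq_of_norm_eq hfy ha0 heq]
  · right
    refine ⟨(a l).valuation, l, hlpos, fun y hy => ?_⟩
    have h1 := hest y hy
    by_cases hy0 : (y:ℚ_[p]) - (x₀:ℚ_[p]) = 0
    · have hyx : y = x₀ := Subtype.coe_injective (sub_eq_zero.mp hy0)
      have hf0 : f (↑y : ℚ_[p]) = 0 := by
        simp only [hy0, zero_pow hlpos.ne', norm_zero, mul_zero, sub_zero] at h1
        exact norm_le_zero_iff.mp h1
      have hsub0 : y - x₀ = 0 := by rw [hyx, sub_self]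
      rw [vpQp, if_pos hf0, vpZp, if_pos hsub0]
      have hlne : ((l:ℤ) : WithTop ℤ) ≠ 0 := by exact_mod_cast hlpos.ne'
      rw [WithTop.mul_top hlne, add_top]
    · have hsubne : y - x₀ ≠ 0 := by
        intro h0
        apply hy0
        have : (((y - x₀ : ℤ_[p])) : ℚ_[p]) = 0 := by rw [h0]; simp
        rwa [PadicInt.coe_sub] at this
      have hinv : (p:ℝ)⁻¹ < 1 := inv_lt_one_of_one_lt₀ hp1
      have htpos : (0:ℝ) < ‖(y:ℚ_[p]) - (x₀:ℚ_[p])‖ := norm_pos_iff.mpr hy0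
      have hmlne : a l * ((y:ℚ_[p]) - (x₀:ℚ_[p]))^l ≠ 0 :=
        mul_ne_zero hal (pow_ne_zero _ hy0)
      have hlt : ‖f ↑y - a l * ((y:ℚ_[p]) - (x₀:ℚ_[p]))^l‖
          < ‖a l * ((y:ℚ_[p]) - (x₀:ℚ_[p]))^l‖ := by
        rw [norm_mul, norm_pow]
        refine lt_of_le_of_lt h1 ?_
        have h2 : (0:ℝ) < ‖a l‖ * ‖(y:ℚ_[p]) - (x₀:ℚ_[p])‖^l := by positivity
        nlinarith
      have heq : ‖f (↑y : ℚ_[p])‖ = ‖a l * ((y:ℚ_[p]) - (x₀:ℚ_[p]))^l‖ := by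
        have hrw : f (↑y : ℚ_[p]) = (f ↑y - a l * ((y:ℚ_[p]) - (x₀:ℚ_[p]))^l)
            + a l * ((y:ℚ_[p]) - (x₀:ℚ_[p]))^l := by ring
        rw [hrw, IsUltrametricDist.norm_add_eq_max_of_norm_ne_norm (ne_of_lt hlt),
          max_eq_right hlt.le]
      have hfy : f (↑y : ℚ_[p]) ≠ 0 := by
        intro h0; rw [h0, norm_zero] at heq
        exact hmlne (norm_eq_zero.mp heq.symm)
      have hval := padic_val_eq_of_norm_eq hfy hmlne heq
      rw [Padic.valuation_mul hal (pow_ne_zero _ hy0), padic_val_pow hy0] at hval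
      have hvz : (y - x₀ : ℤ_[p]).valuation = ((y:ℚ_[p]) - (x₀:ℚ_[p])).valuation := by
        rw [← PadicInt.valuation_coe, PadicInt.coe_sub]
      rw [vpQp, if_neg hfy, vpZp, if_neg hsubne, hval, ← hvz]
      push_cast
      ring

theorem stmt5 (p : ℕ) [Fact p.Prime] (f : ℚ_[p] → ℚ_[p]) (hf : LocallyAnalyticOn p f) :
    ∃ m₀ : ℕ, 0 < m₀ ∧
      ∀ a : ℕ, ¬ ConstantClassP p (fun n => f (n : ℚ_[p])) a (p ^ m₀) →
        ∃ β : ℤ, ∃ l : ℕ, 0 < l ∧ ∃ x₀ : ℤ_[p],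
          ∀ n : ℕ, inClass a (p ^ m₀) n →
            vpQp p (f (n : ℚ_[p])) =
              (β : WithTop ℤ) + ((l : ℤ) : WithTop ℤ) * vpZp p ((n : ℤ_[p]) - x₀) := by
  have hp : p.Prime := Fact.out
  have hp1 : (1 : ℝ) < p := by exact_mod_cast hp.one_lt
  have H : ∀ x : ℤ_[p], ∃ M : ℕ,
      ((∃ t, ∀ y : ℤ_[p], ‖y - x‖ ≤ (p : ℝ) ^ (-(M : ℤ)) → vpQp p (f y) = t) ∨
       (∃ β : ℤ, ∃ l : ℕ, 0 < l ∧ ∀ y : ℤ_[p], ‖y - x‖ ≤ (p : ℝ) ^ (-(M : ℤ)) →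
         vpQp p (f y) = (β : WithTop ℤ) + ((l : ℤ) : WithTop ℤ) * vpZp p (y - x))) := by
    intro x
    obtain ⟨r, hr, a, hs⟩ := hf x
    exact local_struct p f x r hr a hs
  choose M hM using H
  have hcov : (Set.univ : Set ℤ_[p]) ⊆ ⋃ x : ℤ_[p], Metric.ball x ((p:ℝ) ^ (-(M x : ℤ))) := by
    intro z _
    exact Set.mem_iUnion.mpr ⟨z, Metric.mem_ball_self (zpow_pos (by linarith) _)⟩
  obtain ⟨s, hscov⟩ := isCompact_univ.elim_finite_subcover _
    (fun x : ℤ_[p] => Metric.isOpen_ball) hcov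
  refine ⟨s.sup M + 1, Nat.succ_pos _, fun a hnc => ?_⟩
  have hmem : ((a : ℤ_[p])) ∈ ⋃ x ∈ s, Metric.ball x ((p:ℝ) ^ (-(M x : ℤ))) :=
    hscov (Set.mem_univ _)
  obtain ⟨x, hxs, hx⟩ := Set.mem_iUnion₂.mp hmem
  have hle : M x ≤ s.sup M := Finset.le_sup hxs
  have hsub : ∀ n : ℕ, inClass a (p ^ (s.sup M + 1)) n →
      ‖(n : ℤ_[p]) - x‖ ≤ (p:ℝ) ^ (-(M x : ℤ)) := by
    intro n hn
    have hdvd0 := hn.2.dvd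
    have hdvd : ((p ^ (s.sup M + 1) : ℕ) : ℤ) ∣ ((n : ℤ) - (a : ℤ)) := dvd_sub_comm.mp hdvd0
    have h1 : ‖(n : ℤ_[p]) - (a : ℤ_[p])‖ ≤ (p:ℝ) ^ (-((s.sup M + 1 : ℕ) : ℤ)) := by
      have hcast : ((n : ℤ_[p]) - (a : ℤ_[p])) = (((n : ℤ) - (a : ℤ) : ℤ) : ℤ_[p]) := by
        push_cast; ring
      rw [hcast]
      exact PadicInt.norm_int_le_pow_iff_dvd.mpr (by exact_mod_cast hdvd)
    have h2 : ‖(a : ℤ_[p]) - x‖ < (p:ℝ) ^ (-(M x : ℤ)) := by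
      rw [← dist_eq_norm]; exact Metric.mem_ball.mp hx
    have h3 : (p:ℝ) ^ (-((s.sup M + 1 : ℕ) : ℤ)) ≤ (p:ℝ) ^ (-(M x : ℤ)) :=
      zpow_le_zpow_right₀ hp1.le (by push_cast; omega)
    calc ‖(n : ℤ_[p]) - x‖ = ‖((n : ℤ_[p]) - a) + ((a : ℤ_[p]) - x)‖ := by
          exact congrArg norm (by ring)
    _ ≤ max ‖(n : ℤ_[p]) - a‖ ‖(a : ℤ_[p]) - x‖ := IsUltrametricDist.norm_add_le_max _ _
    _ ≤ (p:ℝ) ^ (-(M x : ℤ)) := max_le (h1.trans h3) h2.le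
  rcases hM x with ⟨t, ht⟩ | ⟨β, l, hl, hform⟩
  · refine absurd ⟨t, fun n hn => ?_⟩ hnc
    have := ht (n : ℤ_[p]) (hsub n hn)
    simpa using this
  · refine ⟨β, l, hl, x, fun n hn => ?_⟩
    have := hform (n : ℤ_[p]) (hsub n hn)
    simpa using this
end

section
/- Let p be a prime and let f : ℚ_p → ℚ_p be locally analytic on ℤ_p. Then the set of isolated zeros of f in ℤ_p is finite, and there exists a positive integer m₀ such that for every integer m ≥ m₀ the number of congruence classes modulo p^m that are non-constant with respect to the sequence (f(n))_{n∈ℕ₊} and the prime p equals the number of isolated zeros of f in ℤ_p. -/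
open scoped Classical

/-- `x₀ ∈ ℤ_p` is an isolated zero of `f`: `f(x₀) = 0` and there is a neighbourhood of `x₀`
in `ℤ_p` in which `x₀` is the only zero of `f`. -/
def IsolatedZeroOn (p : ℕ) [Fact p.Prime] (f : ℚ_[p] → ℚ_[p]) (x₀ : ℤ_[p]) : Prop :=
  f (x₀ : ℚ_[p]) = 0 ∧ ∃ U ∈ nhds x₀, ∀ x ∈ U, f (x : ℚ_[p]) = 0 → x = x₀

section Aux
variable {p : ℕ} [hp : Fact p.Prime]

lemma vpQp_eq_iff {x y : ℚ_[p]} : vpQp p x = vpQp p y ↔ ‖x‖ = ‖y‖ := by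
  have hp1 : (1:ℝ) < p := by exact_mod_cast hp.out.one_lt
  unfold vpQp
  rcases eq_or_ne x 0 with hx | hx <;> rcases eq_or_ne y 0 with hy | hy
  · simp [hx, hy]
  · simp only [if_pos hx, if_neg hy, hx, norm_zero]
    exact iff_of_false (fun h => WithTop.coe_ne_top h.symm) (fun h => hy (norm_eq_zero.mp h.symm))
  · simp only [if_neg hx, if_pos hy, hy, norm_zero]
    exact iff_of_false (fun h => WithTop.coe_ne_top h) (fun h => hx (norm_eq_zero.mp h))
  · simp only [if_neg hx, if_neg hy, Padic.norm_eq_zpow_neg_valuation hx, Padic.norm_eq_zpow_neg_valuation hy]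
    rw [WithTop.coe_inj, zpow_right_inj₀ (by positivity) (by exact_mod_cast hp.out.one_lt.ne'),
      neg_inj]

/-- ultrametric: if `‖y - x‖ < ‖x‖` then `‖y‖ = ‖x‖`. -/
lemma norm_eq_of_sub_lt {x y : ℚ_[p]} (h : ‖y - x‖ < ‖x‖) : ‖y‖ = ‖x‖ := by
  have h2 : ‖x + (y - x)‖ = max ‖x‖ ‖y - x‖ := Padic.add_eq_max_of_ne h.ne'
  rw [show x + (y - x) = y by ring] at h2
  rw [h2, max_eq_left h.le]

lemma aux_analyticAt {f : ℚ_[p] → ℚ_[p]} (hf : LocallyAnalyticOn p f)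
    (x₀ : ℤ_[p]) : AnalyticAt ℚ_[p] f (x₀ : ℚ_[p]) := by
  obtain ⟨r, hr, a, ha⟩ := hf x₀
  obtain ⟨k, hk⟩ : ∃ k : ℕ, ((p:ℝ))⁻¹ ^ k ≤ r := by
    have hplt : ((p:ℝ))⁻¹ < 1 := by
      rw [inv_lt_one₀ (by exact_mod_cast hp.out.pos)]
      exact_mod_cast hp.out.one_lt
    obtain ⟨k, hk⟩ := exists_pow_lt_of_lt_one hr hplt
    exact ⟨k, hk.le⟩
  set y₀ : ℚ_[p] := (p : ℚ_[p]) ^ k with hy₀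
  have hy₀norm : ‖y₀‖ = ((p:ℝ))⁻¹ ^ k := by
    rw [hy₀, norm_pow, Padic.norm_p]
  have hy₀le : ‖y₀‖ ≤ r := by rw [hy₀norm]; exact hk
  have hy₀pos : 0 < ‖y₀‖ := by
    rw [hy₀norm]
    exact pow_pos (inv_pos.2 (by exact_mod_cast hp.out.pos)) k
  set P : FormalMultilinearSeries ℚ_[p] ℚ_[p] ℚ_[p] :=
    fun n => ContinuousMultilinearMap.mkPiRing ℚ_[p] (Fin n) (a n) with hP
  -- summability at y₀ gives a bound
  have hsum := ha ((x₀ : ℚ_[p]) + y₀) (by simpa using hy₀le)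
  have hb : ∃ C : ℝ, ∀ n : ℕ, ‖a n * y₀ ^ n‖ ≤ C := by
    have := hsum.summable
    simp only [add_sub_cancel_left] at this
    obtain ⟨C, hC⟩ := (this.tendsto_atTop_zero.norm.bddAbove_range).imp (fun C hC => hC)
    exact ⟨C, fun n => hC ⟨n, rfl⟩⟩
  obtain ⟨C, hC⟩ := hb
  have hrad : (‖y₀‖₊ : ENNReal) ≤ P.radius := by
    apply P.le_radius_of_bound C
    intro n
    have : ‖P n‖ = ‖a n‖ := ContinuousMultilinearMap.norm_mkPiRing (a n)
    rw [this]
    calc ‖a n‖ * (‖y₀‖₊ : ℝ) ^ n = ‖a n * y₀ ^ n‖ := by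
          rw [norm_mul, norm_pow]; rfl
      _ ≤ C := hC n
  have hball : HasFPowerSeriesOnBall f P (x₀ : ℚ_[p]) ‖y₀‖₊ := by
    refine ⟨hrad, by simpa using hy₀pos, ?_⟩
    intro y hy
    have hy' : ‖y‖ ≤ r := by
      have : ‖y‖ < ‖y₀‖ := by
        simpa [edist_zero_right, ENNReal.coe_lt_coe, ← NNReal.coe_lt_coe] using hy
      exact this.le.trans hy₀le
    have := ha ((x₀ : ℚ_[p]) + y) (by simpa using hy')
    simp only [add_sub_cancel_left] at this
    convert this using 2 with n
    · rfl
    simp [hP, ContinuousMultilinearMap.mkPiRing_apply, smul_eq_mul]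
    ring
  exact hball.analyticAt

end Aux

section Aux2
variable {p : ℕ} [hp : Fact p.Prime]

lemma dist_coe (z w : ℤ_[p]) : dist (z : ℚ_[p]) (w : ℚ_[p]) = dist z w := by
  rw [dist_eq_norm, dist_eq_norm, ← PadicInt.coe_sub]; rfl

lemma exists_small_pow {ε : ℝ} (hε : 0 < ε) :
    ∃ k : ℕ, ‖((p : ℤ_[p])) ^ k‖ < ε ∧ ((p : ℤ_[p])) ^ k ≠ 0 := by
  have hplt : ((p:ℝ))⁻¹ < 1 := by
    rw [inv_lt_one₀ (by exact_mod_cast hp.out.pos)]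
    exact_mod_cast hp.out.one_lt
  obtain ⟨k, hk⟩ := exists_pow_lt_of_lt_one hε hplt
  have hnorm : ‖((p : ℤ_[p])) ^ k‖ = ((p:ℝ))⁻¹ ^ k := by
    rw [PadicInt.norm_p_pow]
    rw [zpow_neg, inv_pow, zpow_natCast]
  refine ⟨k, by rw [hnorm]; exact hk, ?_⟩
  rw [← norm_pos_iff, hnorm]
  exact pow_pos (inv_pos.2 (by exact_mod_cast hp.out.pos)) k

lemma not_isolated_of_locally_zero {f : ℚ_[p] → ℚ_[p]} {x s : ℤ_[p]} {ε : ℝ}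
    (h : ∀ z : ℤ_[p], dist z x < ε → f (z : ℚ_[p]) = 0) (hs : dist s x < ε) :
    ¬ IsolatedZeroOn p f s := by
  rintro ⟨-, U, hU, hUz⟩
  obtain ⟨η, hη, hball⟩ := Metric.mem_nhds_iff.mp hU
  obtain ⟨k, hk, hk0⟩ := exists_small_pow (p := p) (lt_min hη (by linarith : (0:ℝ) < ε - dist s x))
  set w : ℤ_[p] := s + (p : ℤ_[p]) ^ k with hw
  have hws : dist w s = ‖((p : ℤ_[p])) ^ k‖ := by
    rw [dist_eq_norm, hw, add_sub_cancel_left]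
  have hwU : w ∈ U := hball (by
    rw [Metric.mem_ball, hws]; exact hk.trans_le (min_le_left _ _))
  have hwx : dist w x < ε := by
    calc dist w x ≤ dist w s + dist s x := dist_triangle _ _ _
      _ < (ε - dist s x) + dist s x := by
          have := hk.trans_le (min_le_right η (ε - dist s x))
          rw [hws]; linarith
      _ = ε := by ring
  have h2 := hUz w hwU (h w hwx)
  rw [hw] at h2
  exact hk0 (add_eq_left.mp h2)

end Aux2

section Aux3
variable {p : ℕ} [hp : Fact p.Prime] {f : ℚ_[p] → ℚ_[p]}

lemma local_struct_s6 (hf : LocallyAnalyticOn p f) (x : ℤ_[p]) :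
    ∃ ε : ℝ, 0 < ε ∧
      (∀ s t : ℤ_[p], IsolatedZeroOn p f s → IsolatedZeroOn p f t →
        dist s x < ε → dist t x < ε → s = t) ∧
      (∀ (y : ℤ_[p]) (ρ : ℝ), 0 < ρ → (∀ z : ℤ_[p], dist z y ≤ ρ → dist z x < ε) →
        (∀ s : ℤ_[p], IsolatedZeroOn p f s → ¬ dist s y ≤ ρ) →
        ∀ z : ℤ_[p], dist z y ≤ ρ → ‖f (z : ℚ_[p])‖ = ‖f (y : ℚ_[p])‖) := by
  have hA := aux_analyticAt hf x
  by_cases hfx : f (x : ℚ_[p]) = 0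
  · rcases hA.eventually_eq_zero_or_eventually_ne_zero with h0 | h1
    · -- locally identically zero
      obtain ⟨ε, hε, hzero⟩ := Metric.eventually_nhds_iff.mp h0
      refine ⟨ε, hε, ?_, ?_⟩
      · intro s t hs _ hsx _
        exact absurd hs (not_isolated_of_locally_zero
          (fun z hz => hzero (by rwa [dist_coe])) hsx)
      · intro y ρ hρ hsub _ z hz
        rw [hzero (by rw [dist_coe]; exact hsub z hz),
          hzero (by rw [dist_coe]; exact hsub y (by simpa using hρ.le))]
    · -- x is an isolated zero
      rw [eventually_nhdsWithin_iff] at h1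
      obtain ⟨ε₁, hε₁, h₁⟩ := Metric.eventually_nhds_iff.mp h1
      have hx_iso : IsolatedZeroOn p f x := by
        refine ⟨hfx, Metric.ball x ε₁, Metric.ball_mem_nhds x hε₁, ?_⟩
        intro z hz hfz
        by_contra hzx
        exact h₁ (by rw [dist_coe]; exact Metric.mem_ball.mp hz)
          (by simpa using fun h => hzx (Subtype.coe_injective h)) hfz
      -- finite order decomposition
      have hne : ¬ ∀ᶠ z in nhds (x : ℚ_[p]), f z = 0 := by
        intro h0
        obtain ⟨ε₀, hε₀, h₀'⟩ := Metric.eventually_nhds_iff.mp h0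
        obtain ⟨k, hk, hk0⟩ := exists_small_pow (p := p) (lt_min hε₀ hε₁)
        set w : ℤ_[p] := x + (p : ℤ_[p]) ^ k with hw
        have hws : dist (w : ℚ_[p]) (x : ℚ_[p]) = ‖((p : ℤ_[p])) ^ k‖ := by
          rw [dist_coe, dist_eq_norm, hw, add_sub_cancel_left]
        have hwne : (w : ℚ_[p]) ∈ ({(x : ℚ_[p])}ᶜ : Set ℚ_[p]) := by
          simp only [Set.mem_compl_iff, Set.mem_singleton_iff]
          intro h
          exact hk0 (add_eq_left.mp (Subtype.coe_injective h))
        exact h₁ (by rw [hws]; exact hk.trans_le (min_le_right _ _)) hwne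
          (h₀' (by rw [hws]; exact hk.trans_le (min_le_left _ _)))
      have ho : analyticOrderAt f (x : ℚ_[p]) ≠ ⊤ := fun h => hne (analyticOrderAt_eq_top.mp h)
      obtain ⟨k, hk⟩ : ∃ k : ℕ, analyticOrderAt f (x : ℚ_[p]) = (k : ℕ∞) := by
        lift analyticOrderAt f (x : ℚ_[p]) to ℕ using ho with k hk
        exact ⟨k, rfl⟩
      obtain ⟨g, hg, hgx, hev⟩ := (hA.analyticOrderAt_eq_natCast).mp hk
      have hgx' : 0 < ‖g (x : ℚ_[p])‖ := norm_pos_iff.mpr hgx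
      obtain ⟨δ₂, hδ₂, h₂⟩ := Metric.continuousAt_iff.mp hg.continuousAt _ hgx'
      obtain ⟨δ₃, hδ₃, h₃⟩ := Metric.eventually_nhds_iff.mp hev
      set ε := min ε₁ (min δ₂ δ₃) with hεdef
      have hε : 0 < ε := lt_min hε₁ (lt_min hδ₂ hδ₃)
      have keynorm : ∀ z : ℚ_[p], dist z (x : ℚ_[p]) < ε →
          ‖f z‖ = ‖z - (x : ℚ_[p])‖ ^ k * ‖g (x : ℚ_[p])‖ := by
        intro z hz
        rw [h₃ (hz.trans_le ((min_le_right _ _).trans (min_le_right _ _)))]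
        rw [smul_eq_mul, norm_mul, norm_pow]
        congr 1
        have hgz := h₂ (hz.trans_le ((min_le_right _ _).trans (min_le_left _ _)))
        rw [dist_eq_norm] at hgz
        exact norm_eq_of_sub_lt hgz
      refine ⟨ε, hε, ?_, ?_⟩
      · -- only possible isolated zero in the ε-ball is x itself
        have huniq : ∀ s : ℤ_[p], IsolatedZeroOn p f s → dist s x < ε → s = x := by
          intro s hs hsx
          by_contra hsne
          exact h₁
            (by rw [dist_coe]; exact hsx.trans_le (min_le_left _ _))
            (by simpa using fun h => hsne (Subtype.coe_injective h)) hs.1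
        intro s t hs ht hsx htx
        rw [huniq s hs hsx, huniq t ht htx]
      · intro y ρ hρ hsub hno z hz
        have hxy : ρ < dist x y := lt_of_not_ge (hno x hx_iso)
        have hnz : ∀ w : ℤ_[p], dist w y ≤ ρ →
            ‖(w : ℚ_[p]) - (x : ℚ_[p])‖ = ‖(y : ℚ_[p]) - (x : ℚ_[p])‖ := by
          intro w hw
          apply norm_eq_of_sub_lt
          have h1' : ‖(w : ℚ_[p]) - (x : ℚ_[p]) - ((y : ℚ_[p]) - (x : ℚ_[p]))‖
              = dist w y := by
            rw [show (w : ℚ_[p]) - (x : ℚ_[p]) - ((y : ℚ_[p]) - (x : ℚ_[p]))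
                = (w : ℚ_[p]) - (y : ℚ_[p]) by ring, ← dist_eq_norm, dist_coe]
          have h2' : ‖(y : ℚ_[p]) - (x : ℚ_[p])‖ = dist x y := by
            rw [← dist_eq_norm, dist_coe, dist_comm]
          rw [h1', h2']
          exact hw.trans_lt hxy
        rw [keynorm (z : ℚ_[p]) (by rw [dist_coe]; exact hsub z hz),
          keynorm (y : ℚ_[p]) (by rw [dist_coe]; exact hsub y (by simpa using hρ.le)),
          hnz z hz, hnz y (by simpa using hρ.le)]
  · -- f x ≠ 0 : norm locally constant
    have hfx' : 0 < ‖f (x : ℚ_[p])‖ := norm_pos_iff.mpr hfx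
    obtain ⟨ε, hε, hcon⟩ := Metric.continuousAt_iff.mp hA.continuousAt _ hfx'
    have hnorm : ∀ z : ℤ_[p], dist z x < ε → ‖f (z : ℚ_[p])‖ = ‖f (x : ℚ_[p])‖ := by
      intro z hz
      have := hcon (by rw [dist_coe]; exact hz)
      rw [dist_eq_norm] at this
      exact norm_eq_of_sub_lt this
    refine ⟨ε, hε, ?_, ?_⟩
    · intro s t hs _ hsx _
      exact absurd (hnorm s hsx) (by rw [hs.1, norm_zero]; exact hfx'.ne)
    · intro y ρ hρ hsub _ z hz
      rw [hnorm z (hsub z hz), hnorm y (hsub y (by simpa using hρ.le))]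

end Aux3

section Aux4
variable {p : ℕ} [hp : Fact p.Prime] {f : ℚ_[p] → ℚ_[p]}

lemma dist_nat_le_iff {a b m : ℕ} :
    dist ((a : ℤ_[p])) ((b : ℤ_[p])) ≤ (p : ℝ) ^ (-(m : ℤ)) ↔ a ≡ b [MOD p ^ m] := by
  rw [dist_eq_norm]
  have h1 : ((a : ℤ_[p]) - b) = (((a : ℤ) - b : ℤ) : ℤ_[p]) := by push_cast; ring
  rw [h1, PadicInt.norm_int_le_pow_iff_dvd, Nat.modEq_iff_dvd, dvd_sub_comm]
  constructor
  · intro h; exact_mod_cast h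
  · intro h; exact_mod_cast h

lemma appr_dist (x : ℤ_[p]) (n : ℕ) :
    dist x ((x.appr n : ℕ) : ℤ_[p]) ≤ (p : ℝ) ^ (-(n : ℤ)) := by
  rw [dist_eq_norm]
  exact (PadicInt.norm_le_pow_iff_mem_span_pow _ n).mpr (PadicInt.appr_spec n x)

lemma nonconst_of_iso (hf : LocallyAnalyticOn p f) {x : ℤ_[p]} (hx : IsolatedZeroOn p f x)
    {a m : ℕ} (hax : dist x ((a : ℤ_[p])) ≤ (p : ℝ) ^ (-(m : ℤ))) :
    ¬ ConstantClassP p (fun n => f (n : ℚ_[p])) a (p ^ m) := by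
  rintro ⟨t, ht⟩
  have hppos : (0 : ℝ) < (p : ℝ)⁻¹ := inv_pos.2 (by exact_mod_cast hp.out.pos)
  have hplt : ((p : ℝ))⁻¹ < 1 := by
    rw [inv_lt_one₀ (by exact_mod_cast hp.out.pos)]
    exact_mod_cast hp.out.one_lt
  -- construct integers in the class, distinct from x, converging to x
  have key : ∀ M : ℕ, ∃ nM : ℕ, 0 < nM ∧ nM ≡ a [MOD p ^ m] ∧ ((nM : ℤ_[p]) ≠ x) ∧
      dist ((nM : ℤ_[p])) x ≤ (p : ℝ) ^ (-((m + M : ℕ) : ℤ)) := by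
    intro M
    set b : ℕ := x.appr (m + M) with hb
    have hcand : ∀ c : ℕ, 0 < c → c ≤ 2 →
        (0 < b + c * p ^ (m + M) ∧ (b + c * p ^ (m + M)) ≡ a [MOD p ^ m] ∧
          dist (((b + c * p ^ (m + M) : ℕ) : ℤ_[p])) x ≤ (p : ℝ) ^ (-((m + M : ℕ) : ℤ))) := by
      intro c hc hc2
      have hpow : 0 < p ^ (m + M) := pow_pos hp.out.pos _
      have hdist : dist (((b + c * p ^ (m + M) : ℕ) : ℤ_[p])) x ≤
          (p : ℝ) ^ (-((m + M : ℕ) : ℤ)) := by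
        rw [dist_eq_norm]
        have hcast : ((b + c * p ^ (m + M) : ℕ) : ℤ_[p]) - x =
            ((b : ℤ_[p]) - x) + (c : ℤ_[p]) * ((p : ℤ_[p])) ^ (m + M) := by
          push_cast; ring
        rw [hcast]
        refine (PadicInt.nonarchimedean _ _).trans (max_le ?_ ?_)
        · rw [← dist_eq_norm, dist_comm]; exact appr_dist x (m + M)
        · rw [norm_mul, PadicInt.norm_p_pow]
          calc ‖(c : ℤ_[p])‖ * (p : ℝ) ^ (-((m + M : ℕ) : ℤ)) ≤
                1 * (p : ℝ) ^ (-((m + M : ℕ) : ℤ)) := by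
                  apply mul_le_mul_of_nonneg_right (PadicInt.norm_le_one _) (by positivity)
            _ = _ := one_mul _
      refine ⟨by positivity, ?_, hdist⟩
      · -- congruence
        rw [← dist_nat_le_iff (p := p)]
        calc dist (((b + c * p ^ (m + M) : ℕ) : ℤ_[p])) ((a : ℤ_[p]))
            ≤ max (dist (((b + c * p ^ (m + M) : ℕ) : ℤ_[p])) x) (dist x ((a : ℤ_[p]))) := by
              rw [dist_eq_norm, dist_eq_norm, dist_eq_norm]
              calc ‖((b + c * p ^ (m + M) : ℕ) : ℤ_[p]) - (a : ℤ_[p])‖ =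
                  ‖(((b + c * p ^ (m + M) : ℕ) : ℤ_[p]) - x) + (x - (a : ℤ_[p]))‖ := by ring_nf
                _ ≤ _ := PadicInt.nonarchimedean _ _
          _ ≤ (p : ℝ) ^ (-(m : ℤ)) := by
              refine max_le (hdist.trans ?_) hax
              apply zpow_le_zpow_right₀ (by exact_mod_cast hp.out.one_le)
              push_cast; omega
    by_cases hb1 : (((b + 1 * p ^ (m + M) : ℕ) : ℤ_[p]) = x)
    · refine ⟨b + 2 * p ^ (m + M), (hcand 2 (by norm_num) le_rfl).1,
        (hcand 2 (by norm_num) le_rfl).2.1, ?_, (hcand 2 (by norm_num) le_rfl).2.2⟩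
      rw [← hb1]
      intro hcontra
      have : ((b + 2 * p ^ (m + M) : ℕ) : ℤ_[p]) - ((b + 1 * p ^ (m + M) : ℕ) : ℤ_[p]) = 0 :=
        sub_eq_zero.mpr hcontra
      rw [show ((b + 2 * p ^ (m + M) : ℕ) : ℤ_[p]) - ((b + 1 * p ^ (m + M) : ℕ) : ℤ_[p]) =
        ((p : ℤ_[p])) ^ (m + M) by push_cast; ring] at this
      have hz : ‖((p : ℤ_[p])) ^ (m + M)‖ = 0 := by rw [this, norm_zero]
      rw [PadicInt.norm_p_pow] at hz
      exact absurd hz (zpow_ne_zero _ (Nat.cast_ne_zero.mpr hp.out.pos.ne'))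
    · exact ⟨b + 1 * p ^ (m + M), (hcand 1 (by norm_num) (by norm_num)).1,
        (hcand 1 (by norm_num) (by norm_num)).2.1, hb1, (hcand 1 (by norm_num) (by norm_num)).2.2⟩
  choose N hNpos hNmod hNne hNdist using key
  -- convergence to x
  have hdist0 : Filter.Tendsto (fun M : ℕ => dist ((N M : ℤ_[p])) x) Filter.atTop (nhds 0) := by
    apply squeeze_zero (fun _ => dist_nonneg) hNdist
    have : (fun M : ℕ => (p : ℝ) ^ (-((m + M : ℕ) : ℤ))) =
        (fun M : ℕ => (p : ℝ)⁻¹ ^ m * ((p : ℝ)⁻¹) ^ M) := by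
      funext M
      rw [zpow_neg, zpow_natCast, ← inv_pow, pow_add, mul_comm] -- maybe
    rw [this]
    simpa using (tendsto_pow_atTop_nhds_zero_of_lt_one hppos.le hplt).const_mul ((p : ℝ)⁻¹ ^ m)
  have hT : Filter.Tendsto (fun M : ℕ => ((N M : ℤ_[p]))) Filter.atTop (nhds x) :=
    tendsto_iff_dist_tendsto_zero.mpr hdist0
  by_cases hall : ∀ M : ℕ, f ((N M : ℕ) : ℚ_[p]) = 0
  · obtain ⟨hx0, U, hU, hUz⟩ := hx
    have hev : ∀ᶠ M in Filter.atTop, ((N M : ℤ_[p])) ∈ U := hT hU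
    obtain ⟨M, hM⟩ := hev.exists
    exact hNne M (hUz ((N M : ℤ_[p])) hM (by exact_mod_cast hall M))
  · push_neg at hall
    obtain ⟨M₀, hM₀⟩ := hall
    have hc : 0 < ‖f ((N M₀ : ℕ) : ℚ_[p])‖ := norm_pos_iff.mpr hM₀
    have hconst : ∀ M : ℕ, ‖f ((N M : ℕ) : ℚ_[p])‖ = ‖f ((N M₀ : ℕ) : ℚ_[p])‖ := by
      intro M
      apply vpQp_eq_iff.mp
      rw [ht (N M) ⟨hNpos M, hNmod M⟩, ht (N M₀) ⟨hNpos M₀, hNmod M₀⟩]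
    -- f (N M) → f x = 0
    have hfc : Filter.Tendsto (fun M : ℕ => f ((N M : ℕ) : ℚ_[p])) Filter.atTop (nhds 0) := by
      have hcont := (aux_analyticAt hf x).continuousAt
      have hTQ : Filter.Tendsto (fun M : ℕ => ((N M : ℕ) : ℚ_[p])) Filter.atTop
          (nhds (x : ℚ_[p])) := by
        have heq : ∀ M : ℕ, dist ((N M : ℕ) : ℚ_[p]) (x : ℚ_[p]) = dist ((N M : ℤ_[p])) x := by
          intro M
          rw [← dist_coe]
          norm_cast
        rw [tendsto_iff_dist_tendsto_zero]
        simpa only [heq] using hdist0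
      have := hcont.tendsto.comp hTQ
      rwa [hx.1] at this
    have : Filter.Tendsto (fun _ : ℕ => ‖f ((N M₀ : ℕ) : ℚ_[p])‖) Filter.atTop (nhds 0) := by
      have hnorm := hfc.norm
      rw [norm_zero] at hnorm
      exact Filter.Tendsto.congr (fun M => hconst M) hnorm
    exact hc.ne' (tendsto_nhds_unique this tendsto_const_nhds).symm

end Aux4

section Aux5
variable {p : ℕ} [hp : Fact p.Prime] {f : ℚ_[p] → ℚ_[p]}

lemma uniform_struct (hf : LocallyAnalyticOn p f) :
    {x : ℤ_[p] | IsolatedZeroOn p f x}.Finite ∧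
    ∃ δ : ℝ, 0 < δ ∧ ∀ (y : ℤ_[p]) (ρ : ℝ), 0 < ρ → ρ < δ →
      ((∀ s : ℤ_[p], IsolatedZeroOn p f s → ¬ dist s y ≤ ρ) →
        ∀ z : ℤ_[p], dist z y ≤ ρ → ‖f (z : ℚ_[p])‖ = ‖f (y : ℚ_[p])‖) ∧
      (∀ s t : ℤ_[p], IsolatedZeroOn p f s → IsolatedZeroOn p f t →
        dist s y ≤ ρ → dist t y ≤ ρ → s = t) := by
  choose ε hε hsing hP using local_struct_s6 hf
  have hcover : (Set.univ : Set ℤ_[p]) ⊆ ⋃ x, Metric.ball x (ε x) := by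
    intro z _
    exact Set.mem_iUnion.2 ⟨z, Metric.mem_ball_self (hε z)⟩
  constructor
  · obtain ⟨t, ht⟩ := isCompact_univ.elim_finite_subcover _
      (fun x : ℤ_[p] => Metric.isOpen_ball) hcover
    have hsubset : {x : ℤ_[p] | IsolatedZeroOn p f x} ⊆
        ⋃ x ∈ t, ({s : ℤ_[p] | IsolatedZeroOn p f s} ∩ Metric.ball x (ε x)) := by
      intro s hs
      obtain ⟨x, hx, hball⟩ := Set.mem_iUnion₂.mp (ht (Set.mem_univ s))
      exact Set.mem_iUnion₂.mpr ⟨x, hx, hs, hball⟩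
    refine Set.Finite.subset (Set.Finite.biUnion t.finite_toSet (fun x _ => ?_)) hsubset
    apply Set.Subsingleton.finite
    intro u hu v hv
    exact hsing x u v hu.1 hv.1 (Metric.mem_ball.mp hu.2) (Metric.mem_ball.mp hv.2)
  · obtain ⟨δ, hδ, hleb⟩ := lebesgue_number_lemma_of_metric isCompact_univ
      (fun x : ℤ_[p] => Metric.isOpen_ball) hcover
    refine ⟨δ, hδ, fun y ρ hρ hρδ => ?_⟩
    obtain ⟨x, hx⟩ := hleb y (Set.mem_univ y)
    have hmem : ∀ z : ℤ_[p], dist z y ≤ ρ → dist z x < ε x := by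
      intro z hz
      exact Metric.mem_ball.mp (hx (Metric.mem_ball.mpr (hz.trans_lt hρδ)))
    constructor
    · intro hno z hz
      exact hP x y ρ hρ hmem hno z hz
    · intro s u hs hu hsy huy
      exact hsing x s u hs hu (hmem s hsy) (hmem u huy)

lemma const_class {a m : ℕ}
    (h : ∀ z : ℤ_[p], dist z ((a : ℤ_[p])) ≤ (p : ℝ) ^ (-(m : ℤ)) →
      ‖f (z : ℚ_[p])‖ = ‖f (((a : ℤ_[p])) : ℚ_[p])‖) :
    ConstantClassP p (fun n => f (n : ℚ_[p])) a (p ^ m) := by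
  refine ⟨vpQp p (f (((a : ℤ_[p])) : ℚ_[p])), fun n hn => ?_⟩
  apply vpQp_eq_iff.mpr
  have := h ((n : ℤ_[p])) (dist_nat_le_iff.mpr hn.2)
  simpa using this

end Aux5

theorem stmt6 (p : ℕ) [Fact p.Prime] (f : ℚ_[p] → ℚ_[p]) (hf : LocallyAnalyticOn p f) :
    {x : ℤ_[p] | IsolatedZeroOn p f x}.Finite ∧
    ∃ m₀ : ℕ, 0 < m₀ ∧ ∀ m : ℕ, m₀ ≤ m →
      {a : ℕ | a < p ^ m ∧ ¬ ConstantClassP p (fun n => f (n : ℚ_[p])) a (p ^ m)}.ncard =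
        {x : ℤ_[p] | IsolatedZeroOn p f x}.ncard := by
  have hp : Fact p.Prime := inferInstance
  have hppos : (0 : ℝ) < (p : ℝ)⁻¹ := inv_pos.2 (by exact_mod_cast hp.out.pos)
  have hplt : ((p : ℝ))⁻¹ < 1 := by
    rw [inv_lt_one₀ (by exact_mod_cast hp.out.pos)]
    exact_mod_cast hp.out.one_lt
  have hzpow : ∀ m : ℕ, (p : ℝ) ^ (-(m : ℤ)) = ((p : ℝ)⁻¹) ^ m := by
    intro m
    rw [zpow_neg, zpow_natCast, ← inv_pow]
  obtain ⟨hfin, δ, hδ, hδP⟩ := uniform_struct hf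
  refine ⟨hfin, ?_⟩
  obtain ⟨k, hk⟩ := exists_pow_lt_of_lt_one hδ hplt
  refine ⟨k + 1, Nat.succ_pos k, fun m hm => ?_⟩
  set ρ : ℝ := (p : ℝ) ^ (-(m : ℤ)) with hρdef
  have hρpos : 0 < ρ := by
    rw [hρdef, hzpow]
    exact pow_pos hppos m
  have hρδ : ρ < δ := by
    rw [hρdef, hzpow]
    calc ((p : ℝ)⁻¹) ^ m ≤ ((p : ℝ)⁻¹) ^ k :=
          pow_le_pow_of_le_one hppos.le hplt.le (by omega)
      _ < δ := hk
  set S := {x : ℤ_[p] | IsolatedZeroOn p f x} with hS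
  set A := {a : ℕ | a < p ^ m ∧ ¬ ConstantClassP p (fun n => f (n : ℚ_[p])) a (p ^ m)} with hA
  have tri : ∀ u v w : ℤ_[p], dist u w ≤ max (dist u v) (dist v w) := by
    intro u v w
    rw [dist_eq_norm, dist_eq_norm, dist_eq_norm,
      show u - w = (u - v) + (v - w) by ring]
    exact PadicInt.nonarchimedean _ _
  have claim : ∀ a : ℕ, ∃ x : ℤ_[p], a ∈ A →
      (IsolatedZeroOn p f x ∧ dist x ((a : ℤ_[p])) ≤ ρ) := by
    intro a
    by_cases hAa : a ∈ A
    · have hex : ∃ x : ℤ_[p], IsolatedZeroOn p f x ∧ dist x ((a : ℤ_[p])) ≤ ρ := by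
        by_contra hno
        push_neg at hno
        refine hAa.2 (const_class ?_)
        exact (hδP ((a : ℤ_[p])) ρ hρpos hρδ).1 (fun s hs => not_le.mpr (hno s hs))
      obtain ⟨x, hx⟩ := hex
      exact ⟨x, fun _ => hx⟩
    · exact ⟨0, fun h => absurd h hAa⟩
  choose φ hφ using claim
  have hinj : Set.InjOn φ A := by
    intro a ha b hb hab
    obtain ⟨hisoa, hdista⟩ := hφ a ha
    obtain ⟨hisob, hdistb⟩ := hφ b hb
    rw [hab] at hdista
    have hdab : dist ((a : ℤ_[p])) ((b : ℤ_[p])) ≤ ρ := by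
      calc dist ((a : ℤ_[p])) ((b : ℤ_[p])) ≤
          max (dist ((a : ℤ_[p])) (φ b)) (dist (φ b) ((b : ℤ_[p]))) := tri _ _ _
        _ ≤ ρ := max_le (by rw [dist_comm]; exact hdista) hdistb
    have hmod : a % p ^ m = b % p ^ m := dist_nat_le_iff.mp hdab
    rwa [Nat.mod_eq_of_lt ha.1, Nat.mod_eq_of_lt hb.1] at hmod
  have himg : φ '' A = S := by
    apply Set.Subset.antisymm
    · rintro _ ⟨a, ha, rfl⟩
      exact (hφ a ha).1
    · intro x hx
      set a := x.appr m with ha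
      have ha1 : a < p ^ m := PadicInt.appr_lt x m
      have hdist : dist x ((a : ℤ_[p])) ≤ ρ := appr_dist x m
      have haA : a ∈ A := ⟨ha1, nonconst_of_iso hf hx hdist⟩
      refine ⟨a, haA, ?_⟩
      exact (hδP ((a : ℤ_[p])) ρ hρpos hρδ).2 (φ a) x (hφ a haA).1 hx (hφ a haA).2 hdist
  rw [← himg, Set.ncard_image_of_injOn hinj]
end

section
/- Let k and a be positive integers and p a prime with a < k < p. Then there exists a positive integer m₀ such that for every positive integer n with n ≡ a (mod p^{m₀−1}(p−1)) and n ≠ a, one has v_p(S(n,k)) = v_p(S(a + p^{m₀−1}(p−1), k)) + v_p(n − a) − m₀ + 1. -/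
/-- `p`-adic valuation of a rational number, with `v_p(0) = ⊤`. -/
noncomputable def vpQ (p : ℕ) (x : ℚ) : WithTop ℤ :=
  if x = 0 then ⊤ else (padicValRat p x : WithTop ℤ)

/-- The Stirling number of the second kind `S(n,k)`, as the rational number satisfying
`k! * S(n,k) = ∑_{j=1}^{k} (-1)^(k-j) * C(k,j) * j^n`. -/
noncomputable def stirl (n k : ℕ) : ℚ :=
  (∑ j ∈ Finset.Icc 1 k, (-1 : ℚ) ^ (k - j) * (k.choose j) * (j : ℚ) ^ n) / (k.factorial : ℚ)

open Finset

private def fQ (k n : ℕ) : ℚ :=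
  ∑ j ∈ Finset.Icc 1 k, (-1:ℚ)^(k-j) * (k.choose j) * (j:ℚ)^n

private lemma stirl_eq (n k : ℕ) : stirl n k = fQ k n / (k.factorial : ℚ) := rfl

private lemma alt_step (k : ℕ) (f : ℕ → ℚ) :
    ∑ j ∈ range (k+2), (-1:ℚ)^(k+1-j) * ((k+1).choose j) * f j
    = ∑ j ∈ range (k+1), (-1:ℚ)^(k-j) * (k.choose j) * (f (j+1) - f j) := by
  have h1 : ∑ j ∈ range (k+2), (-1:ℚ)^(k+1-j) * ((k+1).choose j) * f j
      = ∑ i ∈ range (k+1), (-1:ℚ)^(k-i) * ((k+1).choose (i+1)) * f (i+1)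
        + (-1:ℚ)^(k+1) * ((k+1).choose 0) * f 0 := by
    rw [Finset.sum_range_succ' (fun j => (-1:ℚ)^(k+1-j) * ((k+1).choose j) * f j) (k+1)]
    have e1 : ∀ i ∈ range (k+1), (-1:ℚ)^(k+1-(i+1)) * ((k+1).choose (i+1)) * f (i+1)
        = (-1:ℚ)^(k-i) * ((k+1).choose (i+1)) * f (i+1) := by
      intro i hi
      have : k + 1 - (i+1) = k - i := by omega
      rw [this]
    rw [Finset.sum_congr rfl e1]
    norm_num
  have h2 : ∀ i ∈ range (k+1), (-1:ℚ)^(k-i) * ((k+1).choose (i+1)) * f (i+1)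
      = (-1:ℚ)^(k-i) * (k.choose i) * f (i+1) + (-1:ℚ)^(k-i) * (k.choose (i+1)) * f (i+1) := by
    intro i hi
    rw [Nat.choose_succ_succ]
    push_cast
    ring
  rw [h1, Finset.sum_congr rfl h2, Finset.sum_add_distrib]
  have h3 : ∑ i ∈ range (k+1), (-1:ℚ)^(k-i) * (k.choose (i+1)) * f (i+1)
      + (-1:ℚ)^(k+1) * ((k+1).choose 0) * f 0
      = ∑ j ∈ range (k+2), (-1:ℚ)^(k+1-j) * (k.choose j) * f j := by
    rw [Finset.sum_range_succ' (fun j => (-1:ℚ)^(k+1-j) * (k.choose j) * f j) (k+1)]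
    have e1 : ∀ i ∈ range (k+1), (-1:ℚ)^(k+1-(i+1)) * (k.choose (i+1)) * f (i+1)
        = (-1:ℚ)^(k-i) * (k.choose (i+1)) * f (i+1) := by
      intro i hi
      have : k + 1 - (i+1) = k - i := by omega
      rw [this]
    rw [Finset.sum_congr rfl e1]
    norm_num
  rw [add_assoc, h3]
  have h4 : ∑ j ∈ range (k+2), (-1:ℚ)^(k+1-j) * (k.choose j) * f j
      = ∑ j ∈ range (k+1), (-1:ℚ)^(k+1-j) * (k.choose j) * f j := by
    rw [Finset.sum_range_succ]
    simp [Nat.choose_succ_self]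
  rw [h4]
  have h5 : ∀ j ∈ range (k+1), (-1:ℚ)^(k+1-j) * (k.choose j) * f j
      = -((-1:ℚ)^(k-j) * (k.choose j) * f j) := by
    intro j hj
    simp only [mem_range] at hj
    have : k + 1 - j = (k - j) + 1 := by omega
    rw [this, pow_succ]
    ring
  rw [Finset.sum_congr rfl h5, Finset.sum_neg_distrib, ← sub_eq_add_neg,
    ← Finset.sum_sub_distrib]
  exact Finset.sum_congr rfl fun j _ => by ring

private lemma alt_sum_pow : ∀ (k : ℕ), ∀ a < k, ∀ c : ℚ,
    ∑ j ∈ range (k+1), (-1:ℚ)^(k-j) * (k.choose j) * (c + j)^a = 0 := by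
  intro k
  induction k with
  | zero => intro a ha; omega
  | succ k IH =>
    intro a ha c
    rw [show k + 1 + 1 = k + 2 from rfl, alt_step k (fun j => (c + j)^a)]
    have key : ∀ j ∈ range (k+1), (c + (j+1:ℕ))^a - (c + j)^a
        = ∑ b ∈ range a, (c + j)^b * (a.choose b) := by
      intro j hj
      have expand : ((c + j) + 1)^a = ∑ b ∈ range (a+1), (c + j)^b * 1^(a-b) * (a.choose b) :=
        add_pow (c + j) 1 a
      have : (c + (j+1:ℕ)) = (c + j) + 1 := by push_cast; ring
      rw [this, expand, Finset.sum_range_succ]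
      simp [Nat.choose_self]
    calc ∑ j ∈ range (k+1), (-1:ℚ)^(k-j) * (k.choose j) * ((c + (j+1:ℕ))^a - (c + j)^a)
        = ∑ j ∈ range (k+1), ∑ b ∈ range a,
            (a.choose b : ℚ) * ((-1:ℚ)^(k-j) * (k.choose j) * (c + j)^b) := by
          refine Finset.sum_congr rfl fun j hj => ?_
          rw [key j hj, Finset.mul_sum]
          exact Finset.sum_congr rfl fun b _ => by ring
      _ = ∑ b ∈ range a, (a.choose b : ℚ) *
            ∑ j ∈ range (k+1), (-1:ℚ)^(k-j) * (k.choose j) * (c + j)^b := by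
          rw [Finset.sum_comm]
          exact Finset.sum_congr rfl fun b _ => by rw [Finset.mul_sum]
      _ = 0 := by
          refine Finset.sum_eq_zero fun b hb => ?_
          rw [IH b (by simp at hb; omega) c, mul_zero]


section NormLemmas

variable {p : ℕ} [hp : Fact p.Prime]

private lemma pn_pow (x : ℚ) (n : ℕ) : padicNorm p (x^n) = (padicNorm p x)^n := by
  induction n with
  | zero => simp [padicNorm.one]
  | succ n ih => rw [pow_succ, padicNorm.mul, ih, pow_succ]

private lemma pn_inv (x : ℚ) : padicNorm p x⁻¹ = (padicNorm p x)⁻¹ := by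
  have := padicNorm.div (p := p) 1 x
  simpa [one_div, padicNorm.one] using this

private lemma pn_zpow (x : ℚ) (e : ℤ) : padicNorm p (x^e) = (padicNorm p x)^e := by
  cases e with
  | ofNat n => simpa using pn_pow x n
  | negSucc n => rw [zpow_negSucc, pn_inv, pn_pow, ← zpow_negSucc]

private lemma pn_one_of_lt {w : ℚ} (h : padicNorm p (w - 1) < 1) : padicNorm p w = 1 := by
  have h1 : padicNorm p (w - 1) ≠ padicNorm p 1 := by rw [padicNorm.one]; exact ne_of_lt h
  have := padicNorm.add_eq_max_of_ne h1
  rw [sub_add_cancel] at this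
  rw [this, padicNorm.one]
  exact max_eq_right h.le

private lemma pn_add_eq_left {x y : ℚ} (h : padicNorm p y < padicNorm p x) :
    padicNorm p (x + y) = padicNorm p x := by
  rw [padicNorm.add_eq_max_of_ne (ne_of_gt h)]
  exact max_eq_left h.le

private lemma geom_nat {w : ℚ} (h : padicNorm p (w - 1) < 1) (e : ℕ) :
    padicNorm p (w^e - 1) ≤ padicNorm p (w - 1) ∧
    padicNorm p (w^e - 1 - e*(w - 1)) ≤ padicNorm p (w - 1)^2 := by
  have hN0 : 0 ≤ padicNorm p (w - 1) := padicNorm.nonneg _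
  induction e with
  | zero => simp [padicNorm.zero, hN0, sq_nonneg, mul_nonneg hN0 hN0, sq]
  | succ e ih =>
    obtain ⟨ih1, ih2⟩ := ih
    have key : w^(e+1) - 1 = (w^e - 1) + ((w - 1) + (w - 1)*(w^e - 1)) := by ring
    have hprod : padicNorm p ((w - 1)*(w^e - 1)) ≤ padicNorm p (w - 1) := by
      rw [padicNorm.mul]
      nlinarith [padicNorm.nonneg (p := p) (w^e - 1)]
    constructor
    · rw [key]
      refine le_trans padicNorm.nonarchimedean ?_
      refine max_le ih1 (le_trans padicNorm.nonarchimedean (max_le le_rfl hprod))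
    · have key2 : w^(e+1) - 1 - (e+1:ℕ)*(w-1)
          = (w^e - 1 - e*(w-1)) + (w - 1)*(w^e - 1) := by push_cast; ring
      rw [key2]
      refine le_trans padicNorm.nonarchimedean (max_le ih2 ?_)
      rw [padicNorm.mul, sq]
      exact mul_le_mul_of_nonneg_left ih1 hN0

private lemma geom_int {w : ℚ} (hw : w ≠ 0) (h : padicNorm p (w - 1) < 1) (e : ℤ) :
    padicNorm p (w^e - 1) ≤ padicNorm p (w - 1) ∧
    padicNorm p (w^e - 1 - e*(w - 1)) ≤ padicNorm p (w - 1)^2 := by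
  have hN0 : 0 ≤ padicNorm p (w - 1) := padicNorm.nonneg _
  cases e with
  | ofNat n => simpa using geom_nat h n
  | negSucc n =>
    set m := n + 1
    have hwn : padicNorm p w = 1 := pn_one_of_lt h
    have hy : w⁻¹ - 1 = -(w - 1) * w⁻¹ := by field_simp; ring
    have hyn : padicNorm p (w⁻¹ - 1) = padicNorm p (w - 1) := by
      rw [hy, padicNorm.mul, pn_inv, hwn, inv_one, mul_one, padicNorm.neg]
    have hy1 : padicNorm p (w⁻¹ - 1) < 1 := by rwa [hyn]
    obtain ⟨g1, g2⟩ := geom_nat hy1 m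
    have hze : w ^ (Int.negSucc n) = (w⁻¹)^m := by
      rw [zpow_negSucc, inv_pow]
    constructor
    · rw [hze]; rw [hyn] at g1; exact g1
    · have hsum : (w⁻¹ - 1) + (w - 1) = (w - 1)^2 * w⁻¹ := by field_simp; ring
      have key : (w⁻¹)^m - 1 - (Int.negSucc n : ℤ) * (w - 1)
          = ((w⁻¹)^m - 1 - m*(w⁻¹ - 1)) + (m:ℚ) * ((w - 1)^2 * w⁻¹) := by
        rw [← hsum]
        have : ((Int.negSucc n : ℤ) : ℚ) = -(m:ℚ) := by
          simp [Int.negSucc_eq, m]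
        rw [this]; ring
      rw [hze, key]
      refine le_trans padicNorm.nonarchimedean (max_le ?_ ?_)
      · rw [hyn] at g2; exact g2
      · rw [padicNorm.mul, padicNorm.mul, pn_inv, hwn, inv_one, mul_one, pn_pow]
        calc padicNorm p (m:ℚ) * padicNorm p (w-1)^2
            ≤ 1 * padicNorm p (w-1)^2 := by
              exact mul_le_mul_of_nonneg_right (padicNorm.of_nat m) (by positivity)
          _ = padicNorm p (w-1)^2 := one_mul _

private lemma pstep (hp3 : 3 ≤ p) {w : ℚ} (h : padicNorm p (w - 1) ≤ (p:ℚ)⁻¹) :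
    padicNorm p (w^(p:ℕ) - 1 - p*(w - 1)) ≤ (p:ℚ)⁻¹ * padicNorm p (w - 1)^2 := by
  have hp1 : (1:ℚ) < p := by exact_mod_cast lt_of_lt_of_le (by norm_num) hp3
  have hpinv1 : (p:ℚ)⁻¹ < 1 := inv_lt_one_of_one_lt₀ hp1
  have hpinv0 : (0:ℚ) < (p:ℚ)⁻¹ := by positivity
  have hN0 : 0 ≤ padicNorm p (w - 1) := padicNorm.nonneg _
  have hlt1 : padicNorm p (w - 1) < 1 := lt_of_le_of_lt h hpinv1
  obtain ⟨q, hq⟩ : ∃ q, p = q + 2 := ⟨p - 2, by omega⟩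
  have e0 : w^(p:ℕ) = ∑ i ∈ range (p+1), (w - 1)^i * ((p:ℕ).choose i : ℚ) := by
    conv_lhs => rw [show w = (w - 1) + 1 by ring]
    have := add_pow (w - 1) 1 p
    simpa using this
  have key : w^(p:ℕ) - 1 - p*(w - 1)
      = ∑ i ∈ range (q+1), (w - 1)^(i+2) * ((p:ℕ).choose (i+2) : ℚ) := by
    rw [e0]
    rw [show p + 1 = (q+1) + 1 + 1 by omega]
    rw [Finset.sum_range_succ' _ ((q+1)+1), Finset.sum_range_succ' _ (q+1)]
    simp only [show ∀ i : ℕ, i + 1 + 1 = i + 2 from fun _ => rfl, pow_zero, one_mul,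
      Nat.choose_zero_right, Nat.cast_one, pow_one, Nat.choose_one_right]
    push_cast [Nat.choose_one_right]
    ring
  rw [key]
  refine padicNorm.sum_le' ?_ (by positivity)
  intro i hi
  simp only [mem_range] at hi
  rw [padicNorm.mul, pn_pow]
  rcases lt_or_eq_of_le (Nat.lt_succ_iff.mp (by omega : i + 2 < p + 1)) with hip | hip
  · -- i + 2 < p : p divides the binomial coefficient
    have hdvd : p ∣ (p:ℕ).choose (i+2) := hp.out.dvd_choose_self (by omega) hip
    have hcb : padicNorm p ((p:ℕ).choose (i+2) : ℚ) ≤ (p:ℚ)⁻¹ := by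
      have h1 : ((p^1 : ℕ) : ℤ) ∣ ((p:ℕ).choose (i+2) : ℤ) := by
        rw [pow_one]; exact_mod_cast hdvd
      have h2 := padicNorm.dvd_iff_norm_le.mp h1
      simpa using h2
    have hwb : padicNorm p (w - 1)^(i+2) ≤ padicNorm p (w - 1)^2 :=
      pow_le_pow_of_le_one hN0 hlt1.le (by omega)
    calc padicNorm p (w-1)^(i+2) * padicNorm p ((p:ℕ).choose (i+2) : ℚ)
        ≤ padicNorm p (w-1)^2 * (p:ℚ)⁻¹ :=
          mul_le_mul hwb hcb (padicNorm.nonneg _) (by positivity)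
      _ = (p:ℚ)⁻¹ * padicNorm p (w-1)^2 := by ring
  · -- i + 2 = p : top term
    rw [hip, Nat.choose_self, Nat.cast_one, padicNorm.one, mul_one]
    calc padicNorm p (w-1)^p = padicNorm p (w-1)^q * padicNorm p (w-1)^2 := by
          rw [← pow_add, show q + 2 = p from hq.symm]
      _ ≤ (p:ℚ)⁻¹ * padicNorm p (w-1)^2 := by
          refine mul_le_mul_of_nonneg_right ?_ (by positivity)
          calc padicNorm p (w-1)^q ≤ ((p:ℚ)⁻¹)^q := pow_le_pow_left₀ hN0 h q
            _ ≤ ((p:ℚ)⁻¹)^1 := pow_le_pow_of_le_one hpinv0.le hpinv1.le (by omega)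
            _ = (p:ℚ)⁻¹ := pow_one _

private lemma piter (hp3 : 3 ≤ p) {w : ℚ} (h : padicNorm p (w - 1) ≤ (p:ℚ)⁻¹) (v : ℕ) :
    padicNorm p (w^(p^v:ℕ) - 1 - ((p^v:ℕ):ℚ)*(w - 1)) ≤ ((p:ℚ)⁻¹)^v * padicNorm p (w - 1)^2 ∧
    padicNorm p (w^(p^v:ℕ) - 1) ≤ ((p:ℚ)⁻¹)^v * padicNorm p (w - 1) := by
  have hp1 : (1:ℚ) < p := by exact_mod_cast lt_of_lt_of_le (by norm_num) hp3
  have hpinv1 : (p:ℚ)⁻¹ < 1 := inv_lt_one_of_one_lt₀ hp1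
  have hpinv0 : (0:ℚ) < (p:ℚ)⁻¹ := by positivity
  have hN0 : 0 ≤ padicNorm p (w - 1) := padicNorm.nonneg _
  have hlt1' : padicNorm p (w - 1) < 1 := lt_of_le_of_lt h hpinv1
  induction v with
  | zero =>
    have e1 : w^(p^0:ℕ) - 1 - ((p^0:ℕ):ℚ)*(w - 1) = 0 := by norm_num
    have e2 : w^(p^0:ℕ) - 1 = w - 1 := by norm_num
    rw [e1, e2]
    constructor
    · rw [padicNorm.zero]; positivity
    · norm_num
  | succ v ih =>
    obtain ⟨ih1, ih2⟩ := ih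
    set z := w^(p^v:ℕ) with hz
    have hz1 : padicNorm p (z - 1) ≤ (p:ℚ)⁻¹ := by
      refine le_trans ih2 ?_
      calc ((p:ℚ)⁻¹)^v * padicNorm p (w-1) ≤ 1 * (p:ℚ)⁻¹ := by
            refine mul_le_mul (pow_le_one₀ hpinv0.le hpinv1.le) h hN0 (by norm_num)
        _ = (p:ℚ)⁻¹ := one_mul _
    have hstep := pstep hp3 hz1
    have hb : padicNorm p (z^(p:ℕ) - 1 - p*(z - 1)) ≤ ((p:ℚ)⁻¹)^(v+1) * padicNorm p (w - 1)^2 := by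
      refine le_trans hstep ?_
      have : padicNorm p (z-1)^2 ≤ (((p:ℚ)⁻¹)^v * padicNorm p (w-1))^2 :=
        pow_le_pow_left₀ (padicNorm.nonneg _) ih2 2
      calc (p:ℚ)⁻¹ * padicNorm p (z-1)^2 ≤ (p:ℚ)⁻¹ * (((p:ℚ)⁻¹)^v * padicNorm p (w-1))^2 :=
            mul_le_mul_of_nonneg_left this hpinv0.le
        _ = ((p:ℚ)⁻¹)^(v+1) * padicNorm p (w-1)^2 * ((p:ℚ)⁻¹)^v := by ring
        _ ≤ ((p:ℚ)⁻¹)^(v+1) * padicNorm p (w-1)^2 * 1 := by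
            refine mul_le_mul_of_nonneg_left (pow_le_one₀ hpinv0.le hpinv1.le) (by positivity)
        _ = ((p:ℚ)⁻¹)^(v+1) * padicNorm p (w-1)^2 := mul_one _
    have hzp : z^(p:ℕ) = w^(p^(v+1):ℕ) := by
      rw [hz, ← pow_mul, pow_succ]
    have hNp : padicNorm p ((p:ℚ)) = (p:ℚ)⁻¹ := padicNorm.padicNorm_p hp.out.one_lt
    have part1 : padicNorm p (w^(p^(v+1):ℕ) - 1 - ((p^(v+1):ℕ):ℚ)*(w - 1))
        ≤ ((p:ℚ)⁻¹)^(v+1) * padicNorm p (w - 1)^2 := by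
      have key : w^(p^(v+1):ℕ) - 1 - ((p^(v+1):ℕ):ℚ)*(w - 1)
          = (z^(p:ℕ) - 1 - p*(z - 1)) + (p:ℚ)*(z - 1 - ((p^v:ℕ):ℚ)*(w - 1)) := by
        rw [← hzp]
        push_cast
        ring
      rw [key]
      refine le_trans padicNorm.nonarchimedean (max_le hb ?_)
      rw [padicNorm.mul, hNp]
      calc (p:ℚ)⁻¹ * padicNorm p (z - 1 - ((p^v:ℕ):ℚ)*(w-1))
          ≤ (p:ℚ)⁻¹ * (((p:ℚ)⁻¹)^v * padicNorm p (w-1)^2) :=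
            mul_le_mul_of_nonneg_left ih1 hpinv0.le
        _ = ((p:ℚ)⁻¹)^(v+1) * padicNorm p (w-1)^2 := by ring
    refine ⟨part1, ?_⟩
    have key : w^(p^(v+1):ℕ) - 1
        = (w^(p^(v+1):ℕ) - 1 - ((p^(v+1):ℕ):ℚ)*(w - 1)) + ((p^(v+1):ℕ):ℚ)*(w - 1) := by
      ring
    rw [key]
    refine le_trans padicNorm.nonarchimedean (max_le ?_ ?_)
    · refine le_trans part1 ?_
      calc ((p:ℚ)⁻¹)^(v+1) * padicNorm p (w-1)^2
          = ((p:ℚ)⁻¹)^(v+1) * padicNorm p (w-1) * padicNorm p (w-1) := by ring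
        _ ≤ ((p:ℚ)⁻¹)^(v+1) * padicNorm p (w-1) * 1 :=
            mul_le_mul_of_nonneg_left hlt1'.le (by positivity)
        _ = ((p:ℚ)⁻¹)^(v+1) * padicNorm p (w-1) := mul_one _
    · have hcast : padicNorm p (((p^(v+1):ℕ):ℚ)) = ((p:ℚ)⁻¹)^(v+1) := by
        push_cast
        rw [pn_pow, hNp]
      rw [padicNorm.mul, hcast]

private lemma gen_exp (hp3 : 3 ≤ p) {w : ℚ} (hw : w ≠ 0) (h : padicNorm p (w - 1) ≤ (p:ℚ)⁻¹)
    (e : ℤ) :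
    padicNorm p (w^e - 1 - e*(w - 1)) ≤ padicNorm p (e:ℚ) * padicNorm p (w - 1)^2 := by
  have hp1 : (1:ℚ) < p := by exact_mod_cast lt_of_lt_of_le (by norm_num) hp3
  have hpinv1 : (p:ℚ)⁻¹ < 1 := inv_lt_one_of_one_lt₀ hp1
  have hpinv0 : (0:ℚ) < (p:ℚ)⁻¹ := by positivity
  have hN0 : 0 ≤ padicNorm p (w - 1) := padicNorm.nonneg _
  have hlt1 : padicNorm p (w - 1) < 1 := lt_of_le_of_lt h hpinv1
  rcases eq_or_ne e 0 with rfl | he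
  · simp [padicNorm.zero]
  · set v := padicValInt p e with hv
    obtain ⟨e₀, he₀⟩ := padicValInt_dvd (p := p) e
    have hNe : padicNorm p (e:ℚ) = ((p:ℚ)⁻¹)^v := by
      have : padicNorm p ((e:ℤ):ℚ) = (p:ℚ)^(-(padicValRat p ((e:ℤ):ℚ))) :=
        padicNorm.eq_zpow_of_nonzero (by exact_mod_cast he)
      rw [this, padicValRat.of_int, ← hv, zpow_neg, zpow_natCast, ← inv_pow]
    set z := w^((p^v : ℕ)) with hz
    obtain ⟨pit1, pit2⟩ := piter hp3 h v
    have hz1 : padicNorm p (z - 1) ≤ ((p:ℚ)⁻¹)^v * padicNorm p (w - 1) := pit2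
    have hzsmall : padicNorm p (z - 1) < 1 := by
      refine lt_of_le_of_lt hz1 (lt_of_le_of_lt ?_ hpinv1)
      calc ((p:ℚ)⁻¹)^v * padicNorm p (w-1) ≤ 1 * (p:ℚ)⁻¹ :=
            mul_le_mul (pow_le_one₀ hpinv0.le hpinv1.le) h hN0 (by norm_num)
        _ = (p:ℚ)⁻¹ := one_mul _
    have hzne : z ≠ 0 := pow_ne_zero _ hw
    obtain ⟨g1, g2⟩ := geom_int hzne hzsmall e₀
    have hwe : w^e = z^e₀ := by
      rw [he₀, zpow_mul, hz]
      congr 1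
    have key : w^e - 1 - e*(w - 1)
        = (z^e₀ - 1 - e₀*(z - 1)) + (e₀:ℚ)*(z - 1 - ((p^v:ℕ):ℚ)*(w - 1)) := by
      rw [hwe, he₀]
      push_cast
      ring
    rw [key, hNe]
    refine le_trans padicNorm.nonarchimedean (max_le ?_ ?_)
    · refine le_trans g2 ?_
      calc padicNorm p (z-1)^2 ≤ (((p:ℚ)⁻¹)^v * padicNorm p (w-1))^2 :=
            pow_le_pow_left₀ (padicNorm.nonneg _) hz1 2
        _ = ((p:ℚ)⁻¹)^v * padicNorm p (w-1)^2 * ((p:ℚ)⁻¹)^v := by ring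
        _ ≤ ((p:ℚ)⁻¹)^v * padicNorm p (w-1)^2 * 1 :=
            mul_le_mul_of_nonneg_left (pow_le_one₀ hpinv0.le hpinv1.le) (by positivity)
        _ = ((p:ℚ)⁻¹)^v * padicNorm p (w-1)^2 := mul_one _
    · rw [padicNorm.mul]
      calc padicNorm p (e₀:ℚ) * padicNorm p (z - 1 - ((p^v:ℕ):ℚ)*(w-1))
          ≤ 1 * (((p:ℚ)⁻¹)^v * padicNorm p (w-1)^2) := by
            refine mul_le_mul (padicNorm.of_int e₀) pit1 (padicNorm.nonneg _) (by norm_num)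
        _ = ((p:ℚ)⁻¹)^v * padicNorm p (w-1)^2 := one_mul _

private lemma prod_units {s : Finset ℕ} (w : ℕ → ℚ) (e : ℕ → ℤ) {δ : ℚ}
    (hδ0 : 0 ≤ δ) (hδ1 : δ < 1)
    (hw : ∀ j ∈ s, w j ≠ 0) (hN : ∀ j ∈ s, padicNorm p (w j - 1) ≤ δ) :
    padicNorm p (∏ j ∈ s, (w j)^(e j) - 1 - ∑ j ∈ s, (e j : ℚ) * (w j - 1)) ≤ δ^2 ∧
    padicNorm p (∏ j ∈ s, (w j)^(e j) - 1) ≤ δ := by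
  classical
  induction s using Finset.induction with
  | empty => simp [padicNorm.zero]; constructor <;> positivity
  | @insert a s ha IH =>
    have hwa : w a ≠ 0 := hw a (Finset.mem_insert_self a s)
    have hNa : padicNorm p (w a - 1) ≤ δ := hN a (Finset.mem_insert_self a s)
    obtain ⟨IH1, IH2⟩ := IH (fun j hj => hw j (Finset.mem_insert_of_mem hj))
      (fun j hj => hN j (Finset.mem_insert_of_mem hj))
    obtain ⟨g1, g2⟩ := geom_int hwa (lt_of_le_of_lt hNa hδ1) (e a)
    set W := (w a)^(e a) with hW
    set P := ∏ j ∈ s, (w j)^(e j) with hP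
    set S := ∑ j ∈ s, ((e j : ℚ)) * (w j - 1) with hS
    rw [Finset.prod_insert ha, Finset.sum_insert ha]
    have hW1 : padicNorm p (W - 1) ≤ δ := le_trans g1 hNa
    have hW2 : padicNorm p (W - 1 - (e a)*(w a - 1)) ≤ δ^2 :=
      le_trans g2 (pow_le_pow_left₀ (padicNorm.nonneg _) hNa 2)
    have hprod : padicNorm p ((W - 1)*(P - 1)) ≤ δ^2 := by
      rw [padicNorm.mul, sq]
      exact mul_le_mul hW1 IH2 (padicNorm.nonneg _) hδ0
    constructor
    · have key : W*P - 1 - ((e a : ℚ)*(w a - 1) + S)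
          = (W - 1)*(P - 1) + (W - 1 - (e a)*(w a - 1)) + (P - 1 - S) := by ring
      rw [key]
      refine le_trans padicNorm.nonarchimedean (max_le (le_trans padicNorm.nonarchimedean (max_le hprod hW2)) IH1)
    · have key : W*P - 1 = (W - 1)*(P - 1) + ((W - 1) + (P - 1)) := by ring
      rw [key]
      refine le_trans padicNorm.nonarchimedean (max_le ?_ ?_)
      · exact le_trans hprod (by nlinarith)
      · exact le_trans padicNorm.nonarchimedean (max_le hW1 IH2)

private lemma lte_exact (hp3 : 3 ≤ p) {r : ℚ} (hne : r ≠ 1)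
    (h : padicNorm p (r - 1) ≤ (p:ℚ)⁻¹) (v : ℕ) :
    padicNorm p (r^(p^v:ℕ) - 1) = ((p:ℚ)⁻¹)^v * padicNorm p (r - 1) := by
  have hp1 : (1:ℚ) < p := by exact_mod_cast lt_of_lt_of_le (by norm_num) hp3
  have hpinv1 : (p:ℚ)⁻¹ < 1 := inv_lt_one_of_one_lt₀ hp1
  have hpinv0 : (0:ℚ) < (p:ℚ)⁻¹ := by positivity
  have hNpos : 0 < padicNorm p (r - 1) := by
    rcases lt_or_eq_of_le (padicNorm.nonneg (p := p) (r - 1)) with h' | h'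
    · exact h'
    · exact absurd (padicNorm.zero_of_padicNorm_eq_zero h'.symm) (sub_ne_zero_of_ne hne)
  have hlt1 : padicNorm p (r - 1) < 1 := lt_of_le_of_lt h hpinv1
  obtain ⟨pit1, _⟩ := piter hp3 h v
  have hNc : padicNorm p (((p^v:ℕ):ℚ)*(r - 1)) = ((p:ℚ)⁻¹)^v * padicNorm p (r - 1) := by
    rw [padicNorm.mul]
    congr 1
    push_cast
    rw [pn_pow, padicNorm.padicNorm_p hp.out.one_lt, inv_pow]
  have hstrict : padicNorm p (r^(p^v:ℕ) - 1 - ((p^v:ℕ):ℚ)*(r - 1))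
      < padicNorm p (((p^v:ℕ):ℚ)*(r - 1)) := by
    rw [hNc]
    refine lt_of_le_of_lt pit1 ?_
    have : padicNorm p (r-1)^2 < padicNorm p (r-1) := by nlinarith
    have hκ : (0:ℚ) < ((p:ℚ)⁻¹)^v := by positivity
    exact (mul_lt_mul_iff_right₀ hκ).mpr this
  have key : r^(p^v:ℕ) - 1 = ((p^v:ℕ):ℚ)*(r - 1) + (r^(p^v:ℕ) - 1 - ((p^v:ℕ):ℚ)*(r - 1)) := by
    ring
  rw [key, pn_add_eq_left hstrict, hNc]

private lemma pn_prod {α : Type*} {s : Finset α} (F : α → ℚ) :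
    padicNorm p (∏ j ∈ s, F j) = ∏ j ∈ s, padicNorm p (F j) := by
  classical
  induction s using Finset.induction with
  | empty => simp [padicNorm.one]
  | @insert a s ha IH =>
    rw [Finset.prod_insert ha, Finset.prod_insert ha, padicNorm.mul, IH]

private lemma pn_pos {x : ℚ} (hx : x ≠ 0) : 0 < padicNorm p x := by
  rcases lt_or_eq_of_le (padicNorm.nonneg (p := p) x) with h' | h'
  · exact h'
  · exact absurd (padicNorm.zero_of_padicNorm_eq_zero h'.symm) hx

end NormLemmas

set_option maxHeartbeats 1000000 in
theorem stmt8 (p k a : ℕ) (hp : p.Prime) (ha : 0 < a) (hak : a < k) (hkp : k < p) :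
    ∃ m₀ : ℕ, 0 < m₀ ∧
      ∀ n : ℕ, 0 < n → n ≡ a [MOD p ^ (m₀ - 1) * (p - 1)] → n ≠ a →
        vpQ p (stirl n k) =
          vpQ p (stirl (a + p ^ (m₀ - 1) * (p - 1)) k) + vpQ p ((n : ℚ) - (a : ℚ)) +
            ((1 - (m₀ : ℤ) : ℤ) : WithTop ℤ) := by
  haveI : Fact p.Prime := ⟨hp⟩
  have hp3 : 3 ≤ p := by omega
  have hp1 : (1:ℚ) < p := by exact_mod_cast (by omega : 1 < p)
  have hpQ0 : (p:ℚ) ≠ 0 := by positivity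
  have hpinv1 : (p:ℚ)⁻¹ < 1 := inv_lt_one_of_one_lt₀ hp1
  have hpinv0 : (0:ℚ) < (p:ℚ)⁻¹ := by positivity
  set κ : ℚ := (p:ℚ)⁻¹ with hκdef
  set c : ℕ → ℤ := fun j => (-1)^(k-j) * (k.choose j) * (j:ℤ)^a with hc
  have hstirl : ∀ n, stirl n k = fQ k n / (k.factorial : ℚ) := fun n => stirl_eq n k
  have hj0 : ∀ j ∈ Finset.Icc 1 k, (j:ℚ) ≠ 0 := by
    intro j hj
    simp only [Finset.mem_Icc] at hj
    exact Nat.cast_ne_zero.mpr (by omega)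
  have hjnd : ∀ j ∈ Finset.Icc 1 k, ¬ p ∣ j := by
    intro j hj
    simp only [Finset.mem_Icc] at hj
    intro hdvd
    have := Nat.le_of_dvd (by omega) hdvd
    omega
  set u : ℕ → ℚ := fun j => (j:ℚ)^(p-1) with hu
  have hferm : ∀ j ∈ Finset.Icc 1 k, padicNorm p (u j - 1) ≤ κ := by
    intro j hj
    have h1 : (j : ZMod p) ≠ 0 := by
      rw [Ne, ZMod.natCast_eq_zero_iff]
      exact hjnd j hj
    have h2 : (j : ZMod p)^(p-1) = 1 := ZMod.pow_card_sub_one_eq_one h1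
    have hz : (((j:ℤ)^(p-1) - 1 : ℤ) : ZMod p) = 0 := by
      push_cast
      rw [h2]
      ring
    rw [ZMod.intCast_zmod_eq_zero_iff_dvd] at hz
    have hdvd : ((p^1 : ℕ) : ℤ) ∣ ((j:ℤ)^(p-1) - 1) := by
      rw [pow_one]
      exact_mod_cast hz
    have hle := padicNorm.dvd_iff_norm_le.mp hdvd
    have hcast : (((j:ℤ)^(p-1) - 1 : ℤ) : ℚ) = u j - 1 := by rw [hu]; push_cast; ring
    rw [hcast] at hle
    simpa using hle
  set r : ℚ := ∏ j ∈ Finset.Icc 1 k, (u j)^(c j) with hr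
  have hune : ∀ j ∈ Finset.Icc 1 k, u j ≠ 0 := fun j hj => pow_ne_zero _ (hj0 j hj)
  have hr0 : r ≠ 0 := Finset.prod_ne_zero_iff.mpr fun j hj => zpow_ne_zero _ (hune j hj)
  have hrne : r ≠ 1 := by
    obtain ⟨q, hqp, hq1, hq2⟩ := Nat.exists_prime_lt_and_le_two_mul (k/2) (by omega)
    have hqk : q ≤ k := by omega
    have hk2q : k < 2*q := by omega
    haveI : Fact q.Prime := ⟨hqp⟩
    intro hr1
    have hnorm : padicNorm q r = ((q:ℚ)⁻¹^(p-1))^(c q) := by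
      rw [hr, pn_prod]
      rw [Finset.prod_eq_single_of_mem q (Finset.mem_Icc.mpr ⟨hqp.one_lt.le, hqk⟩) ?_]
      · rw [hu, pn_zpow, pn_pow, padicNorm.padicNorm_p hqp.one_lt]
      · intro j hj hjne
        simp only [Finset.mem_Icc] at hj
        have hnd : ¬ q ∣ j := by
          rintro ⟨d, rfl⟩
          rcases Nat.lt_or_ge d 1 with hd | hd
          · have hd0 : d = 0 := by omega
            subst hd0
            exact absurd hj.1 (by simp)
          rcases Nat.lt_or_ge d 2 with hd2 | hd2
          · have hd1 : d = 1 := by omega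
            subst hd1
            rw [mul_one] at hjne
            exact hjne rfl
          · have h2q : 2*q ≤ q*d := by nlinarith
            have := hj.2
            linarith
        rw [hu, pn_zpow, pn_pow, (padicNorm.nat_eq_one_iff _).mpr hnd]
        simp
    rw [hr1, padicNorm.one] at hnorm
    have hq1Q : (1:ℚ) < q := by exact_mod_cast hqp.one_lt
    have hbase0 : (0:ℚ) < (q:ℚ)⁻¹^(p-1) := by positivity
    have hbase1 : (q:ℚ)⁻¹^(p-1) ≠ 1 :=
      ne_of_lt (pow_lt_one₀ (by positivity) (inv_lt_one_of_one_lt₀ hq1Q) (by omega))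
    have hcq : c q = 0 := by
      apply zpow_right_injective₀ hbase0 hbase1
      simp only
      rw [← hnorm]
      simp
    have hcqne : c q ≠ 0 := by
      rw [hc]
      simp only
      refine mul_ne_zero (mul_ne_zero (pow_ne_zero _ (by norm_num)) ?_) (pow_ne_zero _ ?_)
      · exact_mod_cast (Nat.choose_pos hqk).ne'
      · exact_mod_cast hqp.pos.ne'
    exact hcqne hcq
  have hprod0 := prod_units (p := p) u c hpinv0.le hpinv1 hune hferm
  have hrnorm : padicNorm p (r - 1) ≤ κ := hprod0.2
  have hr1ne0 : r - 1 ≠ 0 := sub_ne_zero_of_ne hrne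
  set νz : ℤ := padicValRat p (r - 1) with hνz
  have hDval : padicNorm p (r - 1) = (p:ℚ)^(-νz) := padicNorm.eq_zpow_of_nonzero hr1ne0
  have hν1 : 1 ≤ νz := by
    have h1 : (p:ℚ)^(-νz) ≤ (p:ℚ)^(-(1:ℤ)) := by
      rw [← hDval]
      simpa using hrnorm
    have := (zpow_le_zpow_iff_right₀ hp1).mp h1
    omega
  set ν : ℕ := νz.toNat with hνdef
  have hνcast : (ν:ℤ) = νz := Int.toNat_of_nonneg (by omega)
  have hDκ : padicNorm p (r - 1) = κ^ν := by
    rw [hDval, ← hνcast, hκdef, zpow_neg, zpow_natCast, ← inv_pow]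
  refine ⟨ν + 1, Nat.succ_pos _, ?_⟩
  intro n hn hmod hne
  have hm1 : ν + 1 - 1 = ν := rfl
  rw [hm1] at hmod ⊢
  set M : ℕ := p^ν * (p - 1) with hM
  have hM0 : 0 < M := by
    have h1 : 0 < p^ν := Nat.pow_pos (by omega)
    have h2 : 0 < p - 1 := by omega
    positivity
  obtain ⟨t', ht'⟩ := (Nat.modEq_iff_dvd).mp hmod
  set t : ℤ := -t' with htdef
  have hnt : (n:ℤ) = a + t * M := by
    have h1 : (t:ℤ) * M = -((M:ℤ) * t') := by rw [htdef]; ring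
    linarith [ht', h1]
  have ht0 : t ≠ 0 := by
    intro h0
    rw [h0, zero_mul, add_zero] at hnt
    exact hne (by exact_mod_cast hnt)
  set w : ℕ → ℚ := fun j => (u j)^((p^ν : ℕ)) with hw
  have hwne : ∀ j ∈ Finset.Icc 1 k, w j ≠ 0 := fun j hj => pow_ne_zero _ (hune j hj)
  have hwb : ∀ j ∈ Finset.Icc 1 k, padicNorm p (w j - 1) ≤ κ^(ν+1) := by
    intro j hj
    obtain ⟨_, pit2⟩ := piter hp3 (hferm j hj) ν
    refine le_trans pit2 ?_
    rw [pow_succ]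
    exact mul_le_mul_of_nonneg_left (hferm j hj) (by positivity)
  have hwb1 : ∀ j ∈ Finset.Icc 1 k, padicNorm p (w j - 1) ≤ κ := by
    intro j hj
    refine le_trans (hwb j hj) ?_
    calc κ^(ν+1) ≤ κ^1 := pow_le_pow_of_le_one hpinv0.le hpinv1.le (by omega)
      _ = κ := pow_one _
  set B : ℚ := ∑ j ∈ Finset.Icc 1 k, (c j : ℚ) * (w j - 1) with hB
  have hrP : r^((p^ν : ℕ)) = ∏ j ∈ Finset.Icc 1 k, (w j)^(c j) := by
    rw [hr, ← Finset.prod_pow]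
    refine Finset.prod_congr rfl fun j hj => ?_
    rw [hw]
    simp only
    rw [← zpow_natCast ((u j)^(c j)) (p^ν), ← zpow_mul, mul_comm, zpow_mul, zpow_natCast]
  have hlte := lte_exact hp3 hrne hrnorm ν
  have hrPnorm : padicNorm p (r^((p^ν:ℕ)) - 1) = κ^(2*ν) := by
    rw [hlte, hDκ, ← pow_add]
    congr 1
    omega
  have hprodν := prod_units (p := p) w c (δ := κ^(ν+1)) (by positivity)
    (pow_lt_one₀ hpinv0.le hpinv1 (by omega)) hwne hwb
  have hBnorm : padicNorm p B = κ^(2*ν) := by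
    have herr : padicNorm p (B - (r^((p^ν:ℕ)) - 1)) ≤ κ^(2*ν+2) := by
      have h1 := hprodν.1
      rw [← hrP] at h1
      have heq : B - (r^((p^ν:ℕ)) - 1)
          = -(r^((p^ν:ℕ)) - 1 - ∑ j ∈ Finset.Icc 1 k, (c j : ℚ) * (w j - 1)) := by
        rw [hB]; ring
      rw [heq, padicNorm.neg]
      refine le_trans h1 ?_
      rw [← pow_mul]
      exact pow_le_pow_of_le_one hpinv0.le hpinv1.le (by omega)
    have hlt : padicNorm p (B - (r^((p^ν:ℕ)) - 1)) < padicNorm p (r^((p^ν:ℕ)) - 1) := by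
      rw [hrPnorm]
      exact lt_of_le_of_lt herr (pow_lt_pow_right_of_lt_one₀ hpinv0 hpinv1 (by omega))
    have hsplit : B = (r^((p^ν:ℕ)) - 1) + (B - (r^((p^ν:ℕ)) - 1)) := by ring
    rw [hsplit, pn_add_eq_left hlt, hrPnorm]
  have hsum0 : ∑ j ∈ Finset.Icc 1 k, (-1:ℚ)^(k-j) * (k.choose j) * (j:ℚ)^a = 0 := by
    have h0 := alt_sum_pow k a hak 0
    simp only [zero_add] at h0
    have hIcc : Finset.Icc 1 k = (Finset.range (k+1)).erase 0 := by
      ext j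
      simp only [Finset.mem_Icc, Finset.mem_erase, Finset.mem_range]
      omega
    rw [← Finset.add_sum_erase _ _ (Finset.mem_range.mpr (Nat.succ_pos k))] at h0
    rw [hIcc]
    have hz : (-1:ℚ)^(k-0) * (k.choose 0) * ((0:ℕ):ℚ)^a = 0 := by
      simp [zero_pow (by omega : a ≠ 0)]
    rw [hz, zero_add] at h0
    exact h0
  have hfn : ∀ (nn : ℕ) (tt : ℤ), (nn:ℤ) = a + tt * M →
      fQ k nn = ∑ j ∈ Finset.Icc 1 k, (c j : ℚ) * ((w j)^tt - 1) := by
    intro nn tt hnn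
    have hexp : ∀ j ∈ Finset.Icc 1 k, ((j:ℚ))^nn = (j:ℚ)^a * (w j)^tt := by
      intro j hj
      have h1 : ((j:ℚ))^nn = (j:ℚ)^((nn:ℤ)) := (zpow_natCast _ _).symm
      rw [h1, hnn, zpow_add₀ (hj0 j hj), zpow_natCast]
      congr 1
      rw [mul_comm tt (M:ℤ), zpow_mul, zpow_natCast]
      congr 1
      rw [hw, hu]
      simp only
      rw [← pow_mul]
      congr 1
      rw [hM]
      ring
    rw [fQ]
    calc ∑ j ∈ Finset.Icc 1 k, (-1:ℚ)^(k-j) * (k.choose j) * (j:ℚ)^nn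
        = ∑ j ∈ Finset.Icc 1 k, ((c j : ℚ) * ((w j)^tt - 1)
            + (-1:ℚ)^(k-j) * (k.choose j) * (j:ℚ)^a) := by
          refine Finset.sum_congr rfl fun j hj => ?_
          rw [hexp j hj, hc]
          push_cast
          ring
      _ = ∑ j ∈ Finset.Icc 1 k, (c j : ℚ) * ((w j)^tt - 1) := by
          rw [Finset.sum_add_distrib, hsum0, add_zero]
  have key : ∀ (nn : ℕ) (tt : ℤ), tt ≠ 0 → (nn:ℤ) = a + tt * M →
      padicNorm p (fQ k nn) = padicNorm p (tt:ℚ) * κ^(2*ν) := by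
    intro nn tt htt hnn
    have htQ : (tt:ℚ) ≠ 0 := by exact_mod_cast htt
    have htpos : 0 < padicNorm p (tt:ℚ) := pn_pos htQ
    have herr : padicNorm p (fQ k nn - (tt:ℚ) * B) ≤ padicNorm p (tt:ℚ) * κ^(2*ν+2) := by
      have hrep : fQ k nn - (tt:ℚ) * B = ∑ j ∈ Finset.Icc 1 k,
          (c j : ℚ) * ((w j)^tt - 1 - (tt:ℚ)*(w j - 1)) := by
        rw [hfn nn tt hnn, hB, Finset.mul_sum, ← Finset.sum_sub_distrib]
        exact Finset.sum_congr rfl fun j hj => by ring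
      rw [hrep]
      refine padicNorm.sum_le' ?_ (by positivity)
      intro j hj
      rw [padicNorm.mul]
      have hg := gen_exp hp3 (hwne j hj) (hwb1 j hj) tt
      calc padicNorm p ((c j : ℚ)) * padicNorm p ((w j)^tt - 1 - (tt:ℚ)*(w j - 1))
          ≤ 1 * (padicNorm p (tt:ℚ) * padicNorm p (w j - 1)^2) := by
            refine mul_le_mul (padicNorm.of_int _) hg (padicNorm.nonneg _) (by norm_num)
        _ ≤ 1 * (padicNorm p (tt:ℚ) * (κ^(ν+1))^2) := by
            refine mul_le_mul_of_nonneg_left ?_ (by norm_num)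
            exact mul_le_mul_of_nonneg_left
              (pow_le_pow_left₀ (padicNorm.nonneg _) (hwb j hj) 2) htpos.le
        _ = padicNorm p (tt:ℚ) * κ^(2*ν+2) := by
            rw [one_mul, ← pow_mul]
            congr 2
            omega
    have htB : padicNorm p ((tt:ℚ) * B) = padicNorm p (tt:ℚ) * κ^(2*ν) := by
      rw [padicNorm.mul, hBnorm]
    have hlt : padicNorm p (fQ k nn - (tt:ℚ)*B) < padicNorm p ((tt:ℚ) * B) := by
      rw [htB]
      refine lt_of_le_of_lt herr ?_
      exact (mul_lt_mul_iff_right₀ htpos).mpr (pow_lt_pow_right_of_lt_one₀ hpinv0 hpinv1 (by omega))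
    have hfB : fQ k nn = (tt:ℚ) * B + (fQ k nn - (tt:ℚ)*B) := by ring
    rw [hfB, pn_add_eq_left hlt, htB]
  have hkey1 := key n t ht0 hnt
  have hkey2 := key (a + M) 1 one_ne_zero (by push_cast; ring)
  rw [show ((1:ℤ):ℚ) = 1 by norm_cast, padicNorm.one, one_mul] at hkey2
  have hxval : ((n:ℚ) - a) = (t:ℚ) * (M:ℚ) := by
    have h1 : ((n:ℤ):ℚ) = (((a:ℤ) + t*M : ℤ):ℚ) := by exact_mod_cast congrArg (fun z : ℤ => (z:ℚ)) hnt
    push_cast at h1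
    linarith
  have hMnorm : padicNorm p ((M:ℕ):ℚ) = κ^ν := by
    have hnd : ¬ p ∣ (p - 1) := by
      intro hdvd
      have := Nat.le_of_dvd (by omega) hdvd
      omega
    have h1 : padicNorm p (((p-1:ℕ)):ℚ) = 1 := (padicNorm.nat_eq_one_iff _).mpr hnd
    rw [hM, Nat.cast_mul, padicNorm.mul, Nat.cast_pow, pn_pow,
      padicNorm.padicNorm_p hp.one_lt, h1, mul_one, hκdef]
  have hxnorm : padicNorm p ((n:ℚ) - a) = padicNorm p (t:ℚ) * κ^ν := by
    rw [hxval, padicNorm.mul, hMnorm]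
  have htQ : (t:ℚ) ≠ 0 := by exact_mod_cast ht0
  have htpos : 0 < padicNorm p (t:ℚ) := pn_pos htQ
  have hκν : (0:ℚ) < κ^(2*ν) := by positivity
  have hfn0 : fQ k n ≠ 0 := by
    intro h0
    rw [h0, padicNorm.zero] at hkey1
    nlinarith
  have hfn'0 : fQ k (a+M) ≠ 0 := by
    intro h0
    rw [h0, padicNorm.zero] at hkey2
    nlinarith
  have hx0 : ((n:ℚ) - a) ≠ 0 := sub_ne_zero_of_ne (by exact_mod_cast hne)
  have hkfac0 : (k.factorial : ℚ) ≠ 0 := by positivity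
  have hst1 : stirl n k ≠ 0 := by rw [hstirl]; exact div_ne_zero hfn0 hkfac0
  have hst2 : stirl (a+M) k ≠ 0 := by rw [hstirl]; exact div_ne_zero hfn'0 hkfac0
  have hvfac : padicValRat p (k.factorial : ℚ) = 0 := by
    rw [padicValRat.of_nat]
    norm_cast
    refine padicValNat.eq_zero_of_not_dvd fun hd => ?_
    have := (Nat.Prime.dvd_factorial hp).mp hd
    omega
  have hv1 : padicValRat p (stirl n k) = padicValRat p (fQ k n) := by
    rw [hstirl, padicValRat.div hfn0 hkfac0, hvfac, sub_zero]
  have hv2 : padicValRat p (stirl (a+M) k) = padicValRat p (fQ k (a+M)) := by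
    rw [hstirl, padicValRat.div hfn'0 hkfac0, hvfac, sub_zero]
  have hone : κ^ν * (p:ℚ)^((ν:ℤ)) = 1 := by
    rw [hκdef, zpow_natCast, ← mul_pow, inv_mul_cancel₀ hpQ0, one_pow]
  have hcomb : padicNorm p (fQ k n)
      = padicNorm p (fQ k (a+M)) * padicNorm p ((n:ℚ) - a) * (p:ℚ)^((ν:ℤ)) := by
    rw [hkey1, hkey2, hxnorm]
    calc padicNorm p (t:ℚ) * κ^(2*ν)
        = padicNorm p (t:ℚ) * κ^(2*ν) * (κ^ν * (p:ℚ)^((ν:ℤ))) := by rw [hone, mul_one]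
      _ = κ^(2*ν) * (padicNorm p (t:ℚ) * κ^ν) * (p:ℚ)^((ν:ℤ)) := by ring
  have hval : padicValRat p (fQ k n)
      = padicValRat p (fQ k (a+M)) + padicValRat p ((n:ℚ) - a) - ν := by
    rw [padicNorm.eq_zpow_of_nonzero hfn0, padicNorm.eq_zpow_of_nonzero hfn'0,
      padicNorm.eq_zpow_of_nonzero hx0, ← zpow_add₀ hpQ0, ← zpow_add₀ hpQ0] at hcomb
    have hinj := zpow_right_injective₀ (by positivity : (0:ℚ) < (p:ℚ)) (ne_of_gt hp1) hcomb
    omega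
  rw [vpQ, vpQ, vpQ, if_neg hst1, if_neg hst2, if_neg hx0, hv1, hv2, hval]
  rw [← WithTop.coe_add, ← WithTop.coe_add, WithTop.coe_eq_coe]
  push_cast
  ring
end

section
/- Let p be a prime, x₀ ∈ ℚ_p, l a positive integer, and (a_n)_{n≥l} a sequence in ℚ_p with a_l ≠ 0. Suppose r > 0 and f : ℚ_p → ℚ_p are such that for every x ∈ ℚ_p with |x − x₀|_p ≤ r the series ∑_{n≥l} a_n(x − x₀)^n converges with sum f(x). Then there exists a natural number m such that for every x ≠ x₀ with v_p(x − x₀) ≥ m one has v_p(f(x)) = v_p(a_l) + l·v_p(x − x₀). -/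
open scoped Classical

private lemma val_pow_aux (p : ℕ) [Fact p.Prime] (t : ℚ_[p]) (ht : t ≠ 0) (l : ℕ) :
    (t ^ l).valuation = (l : ℤ) * t.valuation := by
  induction l with
  | zero => simp [Padic.valuation_one]
  | succ n ih =>
      rw [pow_succ, Padic.valuation_mul (pow_ne_zero _ ht) ht, ih]
      push_cast; ring

theorem stmt11 (p : ℕ) [Fact p.Prime] (x₀ : ℚ_[p]) (l : ℕ) (hl : 0 < l)
    (a : ℕ → ℚ_[p]) (hal : a l ≠ 0) (r : ℝ) (hr : 0 < r) (f : ℚ_[p] → ℚ_[p])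
    -- for every `x` with `|x - x₀|_p ≤ r`, the series `∑_{n ≥ l} a_n (x - x₀)^n`
    -- converges with sum `f x`
    (hf : ∀ x : ℚ_[p], ‖x - x₀‖ ≤ r →
      HasSum (fun n : ℕ => a (n + l) * (x - x₀) ^ (n + l)) (f x)) :
    ∃ m : ℕ, ∀ x : ℚ_[p], x ≠ x₀ → (m : WithTop ℤ) ≤ vpQp p (x - x₀) →
      vpQp p (f x) = vpQp p (a l) + ((l : ℤ) : WithTop ℤ) * vpQp p (x - x₀) := by
  have hp1 : 1 < (p : ℝ) := by exact_mod_cast (Fact.out : p.Prime).one_lt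
  have hp0 : (0 : ℝ) < p := lt_trans one_pos hp1
  have hpne : (p : ℝ) ≠ 0 := ne_of_gt hp0
  -- choose k with p^(-k) < r
  obtain ⟨k, hk⟩ : ∃ k : ℕ, ((p : ℝ)⁻¹) ^ k < r :=
    exists_pow_lt_of_lt_one hr (inv_lt_one_of_one_lt₀ hp1)
  have hpk : (p : ℝ) ^ (-(k : ℤ)) < r := by
    rwa [zpow_neg, ← inv_zpow, zpow_natCast]
  -- get a bound C on the coefficients at radius p^(-k)
  have hx₁ : ‖(x₀ + (p : ℚ_[p]) ^ k) - x₀‖ ≤ r := by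
    rw [add_sub_cancel_left, Padic.norm_p_pow]
    exact le_of_lt hpk
  have hsum := hf _ hx₁
  rw [add_sub_cancel_left] at hsum
  have htend : Filter.Tendsto
      (fun n : ℕ => ‖a (n + l) * ((p : ℚ_[p]) ^ k) ^ (n + l)‖)
      Filter.atTop (nhds 0) := by
    simpa using hsum.summable.tendsto_atTop_zero.norm
  obtain ⟨C, hC⟩ := htend.bddAbove_range
  have hC' : ∀ n : ℕ, ‖a (n + l)‖ * (p : ℝ) ^ (-((k * (n + l) : ℕ) : ℤ)) ≤ C := by
    intro n
    have := hC (Set.mem_range_self n)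
    rwa [norm_mul, norm_pow, Padic.norm_p_pow, ← zpow_natCast ((p:ℝ) ^ (-(k:ℤ))),
      ← zpow_mul, show (-(k:ℤ)) * ((n+l : ℕ) : ℤ) = -((k * (n + l) : ℕ) : ℤ) by push_cast; ring]
      at this
  have hC0 : 0 ≤ C := le_trans (mul_nonneg (norm_nonneg _) (le_of_lt (zpow_pos hp0 _))) (hC' 0)
  -- choose j
  have hεpos : 0 < (‖a l‖ * (p : ℝ) ^ (-((k * l : ℕ) : ℤ))) / (C + 1) := by
    apply div_pos (mul_pos (norm_pos_iff.mpr hal) (zpow_pos hp0 _)) (by linarith)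
  obtain ⟨j, hj⟩ := exists_pow_lt_of_lt_one hεpos (inv_lt_one_of_one_lt₀ hp1)
  have hj' : (C + 1) * (p : ℝ) ^ (-(j : ℤ)) < ‖a l‖ * (p : ℝ) ^ (-((k * l : ℕ) : ℤ)) := by
    rw [zpow_neg, ← inv_zpow, zpow_natCast]
    rw [lt_div_iff₀ (by linarith : (0:ℝ) < C + 1)] at hj
    linarith [hj]
  refine ⟨k + j, fun x hx hvx => ?_⟩
  set t := x - x₀ with ht_def
  have ht : t ≠ 0 := sub_ne_zero.mpr hx
  rw [vpQp, if_neg ht] at hvx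
  have hv : ((k + j : ℕ) : ℤ) ≤ t.valuation := by exact_mod_cast hvx
  set v := t.valuation with hv_def
  have hnt : ‖t‖ = (p : ℝ) ^ (-v) := Padic.norm_eq_zpow_neg_valuation ht
  have hvk : (k : ℤ) ≤ v := le_trans (by push_cast; linarith) hv
  have hvj : (j : ℤ) ≤ v - k := by push_cast at hv ⊢; linarith
  -- hf applies at x
  have hxr : ‖x - x₀‖ ≤ r := by
    rw [← ht_def, hnt]
    refine le_of_lt (lt_of_le_of_lt ?_ hpk)
    exact zpow_le_zpow_right₀ hp1.le (by linarith)
  have hS := hf x hxr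
  rw [← ht_def] at hS
  set g := a l * t ^ l with hg_def
  have hg0 : g ≠ 0 := mul_ne_zero hal (pow_ne_zero _ ht)
  -- shifted sum
  have hS' : HasSum (fun n : ℕ => a (n + 1 + l) * t ^ (n + 1 + l)) (f x - g) := by
    have := (hasSum_nat_add_iff' (f := fun n : ℕ => a (n + l) * t ^ (n + l)) 1).mpr hS
    simpa [hg_def] using this
  -- bound the tail
  set B : ℝ := C * (p : ℝ) ^ ((k - v) * (l + 1)) with hB_def
  have hterm : ∀ n : ℕ, ‖a (n + 1 + l) * t ^ (n + 1 + l)‖ ≤ B := by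
    intro n
    have h1 : ‖a (n + 1 + l) * t ^ (n + 1 + l)‖
        = (‖a (n + 1 + l)‖ * (p : ℝ) ^ (-((k * (n + 1 + l) : ℕ) : ℤ)))
          * (p : ℝ) ^ ((k - v) * ((n + 1 + l : ℕ) : ℤ)) := by
      rw [norm_mul, norm_pow, hnt, ← zpow_natCast ((p:ℝ) ^ (-v)), ← zpow_mul,
        mul_assoc, ← zpow_add₀ hpne]
      congr 2
      push_cast; ring
    rw [h1]
    have h2 : (‖a (n + 1 + l)‖ * (p : ℝ) ^ (-((k * (n + 1 + l) : ℕ) : ℤ)))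
        * (p : ℝ) ^ ((k - v) * ((n + 1 + l : ℕ) : ℤ))
        ≤ C * (p : ℝ) ^ ((k - v) * ((n + 1 + l : ℕ) : ℤ)) :=
      mul_le_mul_of_nonneg_right (hC' (n + 1)) (le_of_lt (zpow_pos hp0 _))
    refine h2.trans ?_
    rw [hB_def]
    refine mul_le_mul_of_nonneg_left ?_ hC0
    refine zpow_le_zpow_right₀ hp1.le ?_
    have hkv : k - v ≤ 0 := by linarith
    have : ((l : ℤ) + 1) ≤ ((n + 1 + l : ℕ) : ℤ) := by push_cast; linarith
    nlinarith
  have hSb : ‖f x - g‖ ≤ B := by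
    rw [← hS'.tsum_eq]
    exact IsUltrametricDist.norm_tsum_le_of_forall_le hterm
  -- B < ‖g‖
  have hgnorm : ‖g‖ = (‖a l‖ * (p : ℝ) ^ (-((k * l : ℕ) : ℤ))) * (p : ℝ) ^ ((k - v) * l) := by
    rw [hg_def, norm_mul, norm_pow, hnt, ← zpow_natCast ((p:ℝ) ^ (-v)), ← zpow_mul,
      mul_assoc, ← zpow_add₀ hpne]
    congr 2
    push_cast; ring
  have hBg : B < ‖g‖ := by
    rw [hB_def, hgnorm]
    have h3 : (k - v) * ((l : ℤ) + 1) = (k - v) + (k - v) * l := by ring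
    rw [h3, zpow_add₀ hpne, ← mul_assoc]
    refine mul_lt_mul_of_pos_right ?_ (zpow_pos hp0 _)
    calc C * (p : ℝ) ^ (k - v)
        ≤ C * (p : ℝ) ^ (-(j : ℤ)) :=
          mul_le_mul_of_nonneg_left (zpow_le_zpow_right₀ hp1.le (by linarith)) hC0
      _ ≤ (C + 1) * (p : ℝ) ^ (-(j : ℤ)) :=
          mul_le_mul_of_nonneg_right (by linarith) (le_of_lt (zpow_pos hp0 _))
      _ < ‖a l‖ * (p : ℝ) ^ (-((k * l : ℕ) : ℤ)) := hj'
  -- ‖f x‖ = ‖g‖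
  have hfx : ‖f x‖ = ‖g‖ := by
    have hne : ‖g‖ ≠ ‖f x - g‖ := ne_of_gt (lt_of_le_of_lt hSb hBg)
    have h4 : f x = g + (f x - g) := by ring
    rw [h4, Padic.add_eq_max_of_ne hne, max_eq_left (le_of_lt (lt_of_le_of_lt hSb hBg))]
  have hfx0 : f x ≠ 0 := by
    intro h
    rw [h, norm_zero] at hfx
    exact hg0 (norm_eq_zero.mp hfx.symm)
  -- conclude valuations
  have hveq : (f x).valuation = g.valuation := by
    rw [Padic.norm_eq_zpow_neg_valuation hfx0, Padic.norm_eq_zpow_neg_valuation hg0] at hfx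
    have := (zpow_right_inj₀ hp0 (by exact_mod_cast hp1.ne')).mp hfx
    linarith
  have hgval : g.valuation = (a l).valuation + (l : ℤ) * v := by
    rw [hg_def, Padic.valuation_mul hal (pow_ne_zero _ ht), val_pow_aux p t ht l]
  rw [vpQp, if_neg hfx0, vpQp, if_neg hal, vpQp, if_neg ht]
  rw [hveq, hgval]
  push_cast
  rfl
end

section
/- Let p be a prime and let f : ℚ_p → ℚ_p be locally analytic on ℤ_p. Then there exist a finite set F ⊆ ℤ_p and a set C ⊆ ℤ_p that is both open and closed in the subspace topology of ℤ_p such that {x ∈ ℤ_p : f(x) = 0} = F ∪ C. -/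
open Topology

open FormalMultilinearSeries in
lemma analytic_of_hassum (p : ℕ) [Fact p.Prime] (f : ℚ_[p] → ℚ_[p]) (x₀ : ℚ_[p])
    (r : ℝ) (hr : 0 < r) (a : ℕ → ℚ_[p])
    (h : ∀ x : ℚ_[p], ‖x - x₀‖ ≤ r → HasSum (fun n : ℕ => a n * (x - x₀) ^ n) (f x)) :
    AnalyticAt ℚ_[p] f x₀ := by
  have hp1 : (1:ℝ) < (p:ℝ) := by exact_mod_cast (Fact.out : p.Prime).one_lt
  obtain ⟨k, hk⟩ : ∃ k : ℕ, ((p:ℝ)^k)⁻¹ ≤ r := by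
    obtain ⟨k, hk⟩ := pow_unbounded_of_one_lt r⁻¹ hp1
    exact ⟨k, (inv_le_comm₀ (by positivity) hr).mpr hk.le⟩
  set r' : NNReal := ⟨((p:ℝ)^k)⁻¹, by positivity⟩ with hr'
  have hr'pos : 0 < r' := by
    rw [← NNReal.coe_lt_coe]; show (0:ℝ) < ((p:ℝ)^k)⁻¹; positivity
  have hnorm : ‖((p:ℚ_[p])^k)‖ = ((p:ℝ)^k)⁻¹ := by
    rw [norm_pow, Padic.norm_p, inv_pow]
  have hsum := h (x₀ + (p:ℚ_[p])^k) (by simp [hnorm, hk])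
  have htend : Filter.Tendsto (fun n => ‖a n‖ * ((r':ℝ)) ^ n) Filter.atTop (nhds 0) := by
    have h0 := hsum.summable.tendsto_atTop_zero
    have := h0.norm
    simp only [norm_zero] at this
    convert this using 2 with n
    rw [norm_mul, norm_pow, add_sub_cancel_left, hnorm]; rfl
  obtain ⟨C, hC⟩ := (htend.bddAbove_range).imp (fun C hC n => hC (Set.mem_range_self n))
  have hrad : (r' : ENNReal) ≤ (ofScalars ℚ_[p] a).radius := by
    apply FormalMultilinearSeries.le_radius_of_bound _ C
    intro n
    rw [FormalMultilinearSeries.ofScalars_norm]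
    exact hC n
  have hball : HasFPowerSeriesOnBall f (ofScalars ℚ_[p] a) x₀ r' := by
    refine ⟨hrad, by exact_mod_cast hr'pos, ?_⟩
    intro y hy
    have hy' : ‖y‖ ≤ r := by
      rw [EMetric.mem_ball, edist_zero_right] at hy
      have h1 : ‖y‖₊ < r' := by exact_mod_cast hy
      have : (‖y‖ : ℝ) < ((p:ℝ)^k)⁻¹ := h1
      exact this.le.trans hk
    simpa only [FormalMultilinearSeries.ofScalars_apply_eq, smul_eq_mul,
      add_sub_cancel_left] using h (x₀ + y) (by simpa using hy')
  exact hball.analyticAt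

theorem stmt12 (p : ℕ) [Fact p.Prime] (f : ℚ_[p] → ℚ_[p]) (hf : LocallyAnalyticOn p f) :
    ∃ F C : Set ℤ_[p], F.Finite ∧ IsOpen C ∧ IsClosed C ∧
      {x : ℤ_[p] | f (x : ℚ_[p]) = 0} = F ∪ C := by
  classical
  -- analyticity at every point of ℤ_p
  have han : ∀ x : ℤ_[p], AnalyticAt ℚ_[p] f (x : ℚ_[p]) := by
    intro x
    obtain ⟨r, hr, a, ha⟩ := hf x
    exact analytic_of_hassum p f x r hr a ha
  have hcoe : Continuous (fun x : ℤ_[p] => (x : ℚ_[p])) := continuous_subtype_val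
  set Z : Set ℤ_[p] := {x : ℤ_[p] | f (x : ℚ_[p]) = 0} with hZ
  have hZclosed : IsClosed Z := by
    rw [← isOpen_compl_iff, isOpen_iff_mem_nhds]
    intro x hx
    have hc : ContinuousAt (fun y : ℤ_[p] => f (y : ℚ_[p])) x :=
      ((han x).continuousAt).comp hcoe.continuousAt
    exact hc.preimage_mem_nhds (isOpen_compl_singleton.mem_nhds hx)
  set C : Set ℤ_[p] := interior Z with hC
  set F : Set ℤ_[p] := Z \ C with hF
  -- key dichotomy
  have hkey : ∀ x ∈ Z, x ∈ C ∨ (𝓝[≠] x ⊓ Filter.principal Z = ⊥) := by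
    intro x hx
    rcases (han x).eventually_eq_zero_or_eventually_ne_zero with hA | hB
    · left
      rw [hC, mem_interior_iff_mem_nhds]
      have : {y : ℚ_[p] | f y = 0} ∈ nhds (x : ℚ_[p]) := hA
      have := hcoe.continuousAt.preimage_mem_nhds this
      exact Filter.mem_of_superset this fun y hy => hy
    · right
      -- pull back the punctured-neighborhood statement
      have htendsto : Filter.Tendsto (fun y : ℤ_[p] => (y : ℚ_[p])) (𝓝[≠] x)
          (𝓝[≠] (x : ℚ_[p])) := by
        refine Filter.Tendsto.inf ?_ ?_
        · exact hcoe.continuousAt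
        · rw [Filter.tendsto_principal_principal]
          intro y hy hcontra
          exact hy (Subtype.coe_injective hcontra)
      have hev : ∀ᶠ y : ℤ_[p] in 𝓝[≠] x, f (y : ℚ_[p]) ≠ 0 := htendsto.eventually hB
      rw [Filter.inf_principal_eq_bot]
      filter_upwards [hev] with y hy hyZ
      exact hy hyZ
  have hCopen : IsOpen C := isOpen_interior
  -- F is closed
  have hFclosed : IsClosed F := by
    rw [← closure_subset_iff_isClosed]
    intro x hx
    have hxZ : x ∈ Z := hZclosed.closure_subset (closure_mono Set.diff_subset hx)
    constructor
    · exact hxZ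
    · intro hxC
      have : C ∩ F ≠ ∅ := by
        have := mem_closure_iff.mp hx C hCopen hxC
        intro h; rw [h] at this; exact Set.not_nonempty_empty this
      exact this (by rw [hF]; ext y; simp (config := {contextual := true}) [hC])
  -- F is discrete, hence finite
  have hFfin : F.Finite := by
    apply (hFclosed.isCompact).finite
    rw [isDiscrete_iff_nhdsNE]
    intro x hx
    rcases hkey x hx.1 with h1 | h1
    · exact absurd h1 hx.2
    · refine le_bot_iff.mp ?_
      rw [← h1]
      exact inf_le_inf_left _ (Filter.principal_mono.mpr Set.diff_subset)
  -- C is closed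
  have hCclosed : IsClosed C := by
    rw [← closure_subset_iff_isClosed]
    intro x hx
    have hxZ : x ∈ Z := hZclosed.closure_subset (closure_mono interior_subset hx)
    by_contra hxC
    rcases hkey x hxZ with h1 | h1
    · exact hxC h1
    · have hne : (𝓝[C] x).NeBot := mem_closure_iff_nhdsWithin_neBot.mp hx
      have hle : 𝓝[C] x ≤ 𝓝[≠] x ⊓ Filter.principal Z := by
        refine le_inf (inf_le_inf_left _ ?_) ?_
        · exact Filter.principal_mono.mpr fun y hy => by
            rintro rfl; exact hxC hy
        · exact inf_le_right.trans (Filter.principal_mono.mpr interior_subset)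
      rw [h1] at hle
      exact hne.ne (le_bot_iff.mp hle)
  refine ⟨F, C, hFfin, hCopen, hCclosed, ?_⟩
  rw [hF, Set.diff_union_of_subset interior_subset]
end

section
/- Let p be a prime and n, k positive integers, and set T_p(n,k) = ∑_{1≤j≤k, p∤j} (−1)^{k−j}·binom(k,j)·j^n. If v_p(T_p(n,k)) < n, then v_p(∑_{j=1}^k (−1)^{k−j}·binom(k,j)·j^n) = v_p(T_p(n,k)); equivalently, v_p(k!·S(n,k)) = v_p(T_p(n,k)), i.e. v_p(S(n,k)) = v_p(T_p(n,k)) − v_p(k!). -/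
/-- The partial sum `T_p(n,k) = ∑_{1 ≤ j ≤ k, p ∤ j} (-1)^(k-j) * C(k,j) * j^n`. -/
noncomputable def Tp (p n k : ℕ) : ℚ :=
  ∑ j ∈ (Finset.Icc 1 k).filter (fun j => ¬ p ∣ j),
    (-1 : ℚ) ^ (k - j) * (k.choose j) * (j : ℚ) ^ n

theorem stmt13 (p n k : ℕ) (hp : p.Prime) (hn : 0 < n) (hk : 0 < k)
    (hv : vpQ p (Tp p n k) < ((n : ℤ) : WithTop ℤ)) :
    vpQ p (∑ j ∈ Finset.Icc 1 k, (-1 : ℚ) ^ (k - j) * (k.choose j) * (j : ℚ) ^ n) =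
        vpQ p (Tp p n k) ∧
    vpQ p ((k.factorial : ℚ) * stirl n k) = vpQ p (Tp p n k) ∧
    vpQ p (stirl n k) + ((padicValNat p k.factorial : ℤ) : WithTop ℤ) = vpQ p (Tp p n k) := by
  haveI := Fact.mk hp
  set T := Tp p n k with hT
  set S := ∑ j ∈ Finset.Icc 1 k, (-1 : ℚ) ^ (k - j) * (k.choose j) * (j : ℚ) ^ n with hS
  -- extract T ≠ 0 and valuation bound
  have hT0 : T ≠ 0 := by
    intro h
    rw [vpQ, if_pos h] at hv
    exact (not_top_lt hv)
  rw [vpQ, if_neg hT0] at hv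
  have hvT : padicValRat p T < (n : ℤ) := WithTop.coe_lt_coe.mp hv
  -- split S = T + R
  set R := ∑ j ∈ (Finset.Icc 1 k).filter (fun j => p ∣ j),
      (-1 : ℚ) ^ (k - j) * (k.choose j) * (j : ℚ) ^ n with hR
  have hsplit : S = T + R := by
    rw [hS, hT, Tp, hR, add_comm]
    exact (Finset.sum_filter_add_sum_filter_not _ _ _).symm
  -- R = p^n * (integer)
  set c : ℤ := ∑ j ∈ (Finset.Icc 1 k).filter (fun j => p ∣ j),
      (-1 : ℤ) ^ (k - j) * (k.choose j) * ((j / p : ℕ) : ℤ) ^ n with hc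
  have hRc : R = (p : ℚ) ^ n * (c : ℚ) := by
    rw [hR, hc, Int.cast_sum, Finset.mul_sum]
    apply Finset.sum_congr rfl
    intro j hj
    obtain ⟨m, hm⟩ := (Finset.mem_filter.mp hj).2
    subst hm
    rw [Nat.mul_div_cancel_left m hp.pos]
    push_cast
    ring
  -- S ≠ 0 and padicValRat p S = padicValRat p T
  have hpQ0 : (p : ℚ) ≠ 0 := Nat.cast_ne_zero.mpr hp.pos.ne'
  have hvR : R ≠ 0 → (n : ℤ) ≤ padicValRat p R := by
    intro hR0
    have hc0 : (c : ℚ) ≠ 0 := by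
      intro h; apply hR0; rw [hRc, h, mul_zero]
    rw [hRc, padicValRat.mul (pow_ne_zero _ hpQ0) hc0,
      padicValRat.pow (p : ℚ), padicValRat.self hp.one_lt]
    have : (0 : ℤ) ≤ padicValRat p (c : ℚ) := by
      rw [padicValRat.of_int]
      exact Int.natCast_nonneg _
    omega
  have hS0 : S ≠ 0 := by
    intro h
    have hR0 : R ≠ 0 := fun h' => hT0 (by rw [hsplit, h', add_zero] at h; exact h)
    have : T = -R := by rw [eq_neg_iff_add_eq_zero, ← hsplit, h]
    rw [this, padicValRat.neg] at hvT
    exact absurd (hvR hR0) (not_le.mpr hvT)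
  have hvS : padicValRat p S = padicValRat p T := by
    by_cases hR0 : R = 0
    · rw [hsplit, hR0, add_zero]
    · rw [hsplit]
      exact padicValRat.add_eq_of_lt (hsplit ▸ hS0) hT0 hR0 (lt_of_lt_of_le hvT (hvR hR0))
  -- main conclusions
  have hfac : (k.factorial : ℚ) ≠ 0 := Nat.cast_ne_zero.mpr k.factorial_ne_zero
  have hstirlS : (k.factorial : ℚ) * stirl n k = S := by
    rw [stirl, mul_div_cancel₀ _ hfac]
  have hstirl0 : stirl n k ≠ 0 := by
    intro h
    apply hS0
    rw [← hstirlS, h, mul_zero]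
  have hvfac : padicValRat p (k.factorial : ℚ) = (padicValNat p k.factorial : ℤ) := by
    rw [show ((k.factorial : ℚ)) = ((k.factorial : ℤ) : ℚ) by push_cast; ring,
      padicValRat.of_int, padicValInt, Int.natAbs_natCast]
  refine ⟨?_, ?_, ?_⟩
  · rw [vpQ, if_neg hS0, vpQ, if_neg hT0, hvS]
  · rw [hstirlS, vpQ, if_neg hS0, vpQ, if_neg hT0, hvS]
  · rw [vpQ, if_neg hstirl0, vpQ, if_neg hT0, ← hvS, ← WithTop.coe_add, WithTop.coe_inj,
      ← hvfac, ← padicValRat.mul hstirl0 hfac, mul_comm, hstirlS]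
end

section
/- Let p be an odd prime and let a ∈ ℤ_p with a ≡ 1 (mod p). Then there exists a continuous function g : ℤ_p → ℤ_p such that g(n) = a^n for every natural number n and g(x + y) = g(x)·g(y) for all x, y ∈ ℤ_p. -/
open Finset

theorem stmt15 (p : ℕ) [Fact p.Prime] (hp : p ≠ 2) (a : ℤ_[p])
    (ha : (p : ℤ_[p]) ∣ (a - 1)) :
    ∃ g : ℤ_[p] → ℤ_[p], Continuous g ∧ (∀ n : ℕ, g (n : ℤ_[p]) = a ^ n) ∧
      ∀ x y : ℤ_[p], g (x + y) = g x * g y := by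
  set b : ℤ_[p] := a - 1 with hb
  have hpprime := (Fact.out : p.Prime)
  have hp1 : (1 : ℝ) < p := by exact_mod_cast hpprime.one_lt
  have hr0 : (0 : ℝ) ≤ (p : ℝ)⁻¹ := by positivity
  have hr1 : (p : ℝ)⁻¹ < 1 := inv_lt_one_of_one_lt₀ hp1
  have hbnorm : ‖b‖ ≤ (p : ℝ)⁻¹ := by
    have := (PadicInt.norm_le_pow_iff_mem_span_pow b 1).mpr
      (by rw [Ideal.mem_span_singleton]; simpa using ha)
    simpa [zpow_neg] using this
  set f : ℤ_[p] → ℕ → ℤ_[p] := fun x k => Ring.choose x k * b ^ k with hf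
  have hbound : ∀ x k, ‖f x k‖ ≤ ((p : ℝ)⁻¹) ^ k := fun x k => by
    calc ‖Ring.choose x k * b ^ k‖ ≤ ‖Ring.choose x k‖ * ‖b ^ k‖ := norm_mul_le _ _
      _ ≤ 1 * ((p : ℝ)⁻¹) ^ k := by
          refine mul_le_mul (PadicInt.norm_le_one _) ?_ (norm_nonneg _) zero_le_one
          rw [norm_pow]
          exact pow_le_pow_left₀ (norm_nonneg _) hbnorm k
      _ = ((p : ℝ)⁻¹) ^ k := one_mul _
  have hsumgeo : Summable fun k : ℕ => ((p : ℝ)⁻¹) ^ k := summable_geometric_of_lt_one hr0 hr1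
  have hsumnorm : ∀ x, Summable fun k => ‖f x k‖ := fun x =>
    hsumgeo.of_nonneg_of_le (fun _ => norm_nonneg _) (hbound x)
  refine ⟨fun x => ∑' k, f x k, ?_, ?_, ?_⟩
  · exact continuous_tsum (fun k => by
      exact Continuous.mul (PadicInt.continuous_choose k) continuous_const) hsumgeo
      (fun k x => hbound x k)
  · intro n
    show (∑' k, f (n : ℤ_[p]) k) = a ^ n
    have hzero : ∀ k ∉ Finset.range (n + 1), f (n : ℤ_[p]) k = 0 := by
      intro k hk
      have hk' : n < k := by simpa using hk
      simp [hf, Ring.choose_natCast, Nat.choose_eq_zero_of_lt hk']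
    rw [tsum_eq_sum hzero]
    have := add_pow b (1 : ℤ_[p]) n
    simp only [hb, sub_add_cancel, one_pow, mul_one] at this
    rw [this]
    refine Finset.sum_congr rfl fun k hk => ?_
    simp [hf, hb, Ring.choose_natCast, mul_comm]
  · intro x y
    rw [tsum_mul_tsum_eq_tsum_sum_antidiagonal_of_summable_norm (hsumnorm x) (hsumnorm y)]
    refine tsum_congr fun n => ?_
    simp only [hf]
    rw [Ring.add_choose_eq n (Commute.all x y), Finset.sum_mul]
    refine Finset.sum_congr rfl fun kl hkl => ?_
    have : kl.1 + kl.2 = n := by simpa using Finset.HasAntidiagonal.mem_antidiagonal.mp hkl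
    rw [← this, pow_add]; ring
end

section
/- Let p be an odd prime, b ∈ ℤ_p and x ∈ ℤ_p. Then the sequence j ↦ b^j · (∏_{i=0}^{j−1}(x − i)) · p^j / j! is summable in ℚ_p, and if x = n for a natural number n then its sum ∑_{j=0}^∞ b^j · (∏_{i=0}^{j−1}(n − i)) · p^j / j! equals (1 + p·b)^n. -/
open Finset

lemma prod_eq_smeval {p : ℕ} [Fact p.Prime] (x : ℤ_[p]) (j : ℕ) :
    ∏ i ∈ Finset.range j, (x - (i : ℤ_[p])) = (descPochhammer ℤ j).smeval x := by
  induction j with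
  | zero => simp [Polynomial.smeval_one]
  | succ n ih =>
    rw [Finset.prod_range_succ, descPochhammer_succ_right, Polynomial.smeval_mul,
      Polynomial.smeval_sub, Polynomial.smeval_X, Polynomial.smeval_natCast, ih]
    simp

lemma prod_eq_choose {p : ℕ} [Fact p.Prime] (x : ℤ_[p]) (j : ℕ) :
    ∏ i ∈ Finset.range j, (x - (i : ℤ_[p])) = (j.factorial : ℤ_[p]) * Ring.choose x j := by
  rw [prod_eq_smeval, Ring.descPochhammer_eq_factorial_smul_choose, nsmul_eq_mul]

lemma term_eq {p : ℕ} [Fact p.Prime] (b x : ℤ_[p]) (j : ℕ) :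
    ((b : ℚ_[p]) ^ j * (∏ i ∈ Finset.range j, ((x : ℚ_[p]) - (i : ℚ_[p]))) * (p : ℚ_[p]) ^ j /
        (j.factorial : ℚ_[p])) =
      ((b ^ j * Ring.choose x j : ℤ_[p]) : ℚ_[p]) * (p : ℚ_[p]) ^ j := by
  have h1 : (∏ i ∈ Finset.range j, ((x : ℚ_[p]) - (i : ℚ_[p]))) =
      (((j.factorial : ℤ_[p]) * Ring.choose x j : ℤ_[p]) : ℚ_[p]) := by
    rw [← prod_eq_choose]
    rw [show ((∏ i ∈ Finset.range j, (x - (i:ℤ_[p])) : ℤ_[p]) : ℚ_[p]) =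
        ∏ i ∈ Finset.range j, (((x - (i:ℤ_[p])) : ℤ_[p]) : ℚ_[p]) from
      map_prod (PadicInt.Coe.ringHom) _ _]
    exact Finset.prod_congr rfl (fun i _ => by push_cast; ring)
  have hfac : ((j.factorial : ℚ_[p])) ≠ 0 := by
    exact_mod_cast (Nat.cast_ne_zero (R := ℚ_[p])).2 j.factorial_ne_zero
  rw [h1]
  push_cast
  field_simp

theorem stmt16 (p : ℕ) [Fact p.Prime] (hp : p ≠ 2) (b x : ℤ_[p]) :
    Summable (fun j : ℕ =>
      ((b : ℚ_[p]) ^ j * (∏ i ∈ Finset.range j, ((x : ℚ_[p]) - (i : ℚ_[p]))) * (p : ℚ_[p]) ^ j /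
        (j.factorial : ℚ_[p]))) ∧
    ∀ n : ℕ, x = (n : ℤ_[p]) →
      (∑' j : ℕ,
        ((b : ℚ_[p]) ^ j * (∏ i ∈ Finset.range j, ((x : ℚ_[p]) - (i : ℚ_[p]))) * (p : ℚ_[p]) ^ j /
          (j.factorial : ℚ_[p]))) = (((1 + p * b : ℤ_[p]) : ℚ_[p])) ^ n := by
  have hp1 : (1 : ℝ) < p := by exact_mod_cast (Fact.out : p.Prime).one_lt
  constructor
  · apply Summable.of_norm_bounded (g := fun j : ℕ => ((p : ℝ)⁻¹) ^ j)
    · exact summable_geometric_of_lt_one (by positivity)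
        (inv_lt_one_of_one_lt₀ hp1)
    · intro j
      rw [term_eq, norm_mul, norm_pow, Padic.norm_p]
      calc ‖((b ^ j * Ring.choose x j : ℤ_[p]) : ℚ_[p])‖ * ((p:ℝ)⁻¹) ^ j
          ≤ 1 * ((p:ℝ)⁻¹) ^ j := by
            gcongr
            exact PadicInt.norm_le_one _
        _ = ((p:ℝ)⁻¹) ^ j := one_mul _
  · rintro n rfl
    have hterm : ∀ j : ℕ,
        ((b : ℚ_[p]) ^ j * (∏ i ∈ Finset.range j, (((n : ℤ_[p]) : ℚ_[p]) - (i : ℚ_[p]))) *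
          (p : ℚ_[p]) ^ j / (j.factorial : ℚ_[p])) =
        ((p : ℚ_[p]) * b) ^ j * 1 ^ (n - j) * (n.choose j : ℚ_[p]) := by
      intro j
      rw [term_eq, Ring.choose_natCast]
      push_cast
      ring
    rw [tsum_eq_sum (s := Finset.range (n + 1)) (by
      intro j hj
      rw [hterm j, Nat.choose_eq_zero_of_lt (by simpa using hj)]
      simp)]
    rw [Finset.sum_congr rfl (fun j _ => hterm j), ← add_pow]
    push_cast
    ring
end
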